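/- arXiv:1804.02081 — 5 statements merged into one kernel-verified Lean document; each statement's English description precedes it below -/
import Mathlib

section
/- Let W be a symmetric N×N real matrix with nonnegative entries, positive degrees d_j := Σ_i W_{ij}, D := diag(d_1,…,d_N), H := W·D⁻¹, vol := Σ_j d_j, L̃ := D^{-1/2}(D−W)D^{-1/2}, and q₁ := D^{1/2}𝟙/√vol. Then for all probability vectors p₊, p₋ ∈ ℝ^N (nonnegative entries summing to 1) and every positive integer K, ‖H^K p₊ − H^K p₋‖ ≤ √(d_max) · ‖(I − L̃)^K − q₁q₁ᵀ‖ · (‖D^{-1/2}p₊‖ + ‖D^{-1/2}p₋‖), where d_max := max_i d_i and the matrix norm is the spectral norm. -/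
open Matrix Finset

/-- Euclidean norm of a vector in ℝ^N. -/
noncomputable def eNorm {N : ℕ} (x : Fin N → ℝ) : ℝ := Real.sqrt (∑ i, x i ^ 2)

/-- Spectral (ℓ2 operator) norm of a matrix: sup over v ≠ 0 of ‖Mv‖/‖v‖. -/
noncomputable def specNorm {N : ℕ} (M : Matrix (Fin N) (Fin N) ℝ) : ℝ :=
  sSup {r : ℝ | ∃ v : Fin N → ℝ, v ≠ 0 ∧ r = eNorm (M.mulVec v) / eNorm v}

lemma eNorm_nonneg' {N : ℕ} (x : Fin N → ℝ) : 0 ≤ eNorm x := Real.sqrt_nonneg _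

lemma eNorm_eq_norm {N : ℕ} (x : Fin N → ℝ) :
    eNorm x = ‖(WithLp.equiv 2 (Fin N → ℝ)).symm x‖ := by
  rw [EuclideanSpace.norm_eq]
  unfold eNorm
  congr 1
  refine Finset.sum_congr rfl fun i _ => ?_
  rw [Real.norm_eq_abs, sq_abs]
  rfl

lemma eNorm_sub_le {N : ℕ} (a b : Fin N → ℝ) : eNorm (a - b) ≤ eNorm a + eNorm b := by
  simp only [eNorm_eq_norm]
  exact norm_sub_le _ _

lemma eNorm_pos {N : ℕ} {x : Fin N → ℝ} (hx : x ≠ 0) : 0 < eNorm x := by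
  obtain ⟨i, hi⟩ := Function.ne_iff.mp hx
  apply Real.sqrt_pos.mpr
  apply Finset.sum_pos' (fun j _ => sq_nonneg _)
  exact ⟨i, Finset.mem_univ i, pow_pos (abs_pos.mpr hi) 2 |>.trans_le (by rw [sq_abs])⟩

noncomputable def frob {N : ℕ} (M : Matrix (Fin N) (Fin N) ℝ) : ℝ :=
  Real.sqrt (∑ i, ∑ j, M i j ^ 2)

lemma eNorm_mulVec_le_frob {N : ℕ} (M : Matrix (Fin N) (Fin N) ℝ) (v : Fin N → ℝ) :
    eNorm (M.mulVec v) ≤ frob M * eNorm v := by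
  have h : ∑ i, (M.mulVec v) i ^ 2 ≤ (∑ i, ∑ j, M i j ^ 2) * (∑ j, v j ^ 2) := by
    rw [Finset.sum_mul]
    refine Finset.sum_le_sum fun i _ => ?_
    simpa [Matrix.mulVec, dotProduct] using
      Finset.sum_mul_sq_le_sq_mul_sq Finset.univ (fun j => M i j) v
  calc eNorm (M.mulVec v) = Real.sqrt (∑ i, (M.mulVec v) i ^ 2) := rfl
    _ ≤ Real.sqrt ((∑ i, ∑ j, M i j ^ 2) * (∑ j, v j ^ 2)) := Real.sqrt_le_sqrt h
    _ = frob M * eNorm v := by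
        rw [Real.sqrt_mul (by positivity)]; rfl

lemma specNorm_mulVec_le {N : ℕ} (M : Matrix (Fin N) (Fin N) ℝ) (x : Fin N → ℝ) :
    eNorm (M.mulVec x) ≤ specNorm M * eNorm x := by
  have hbdd : BddAbove {r : ℝ | ∃ v : Fin N → ℝ, v ≠ 0 ∧ r = eNorm (M.mulVec v) / eNorm v} := by
    refine ⟨frob M, fun r hr => ?_⟩
    obtain ⟨v, hv, rfl⟩ := hr
    rw [div_le_iff₀ (eNorm_pos hv)]
    exact eNorm_mulVec_le_frob M v
  by_cases hx : x = 0
  · subst hx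
    simp only [Matrix.mulVec_zero]
    have h0 : eNorm (0 : Fin N → ℝ) = 0 := by simp [eNorm]
    rw [h0, mul_zero]
  · have hmem : eNorm (M.mulVec x) / eNorm x ∈
        {r : ℝ | ∃ v : Fin N → ℝ, v ≠ 0 ∧ r = eNorm (M.mulVec v) / eNorm v} := ⟨x, hx, rfl⟩
    have := le_csSup hbdd hmem
    rw [div_le_iff₀ (eNorm_pos hx)] at this
    exact this

lemma specNorm_nonneg {N : ℕ} (M : Matrix (Fin (N+1)) (Fin (N+1)) ℝ) : 0 ≤ specNorm M := by
  have := specNorm_mulVec_le M (fun _ => 1)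
  have h1 : (0:ℝ) < eNorm (fun _ : Fin (N+1) => (1:ℝ)) := eNorm_pos (by
    intro h; have := congrFun h 0; simp at this)
  nlinarith [eNorm_nonneg' (M.mulVec (fun _ : Fin (N+1) => (1:ℝ)))]

lemma conj_pow' {N : ℕ} (A A' B : Matrix (Fin N) (Fin N) ℝ)
    (h1 : A * A' = 1) (h2 : A' * A = 1) (K : ℕ) :
    (A * B * A') ^ K = A * B ^ K * A' := by
  induction K with
  | zero => simp [h1]
  | succ n ih =>
    rw [pow_succ, pow_succ, ih]
    calc A * B ^ n * A' * (A * B * A') = A * B ^ n * (A' * A) * B * A' := by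
          noncomm_ring
      _ = A * (B ^ n * B) * A' := by rw [h2]; noncomm_ring

/-- for probability vectors p₊, p₋,
‖H^K p₊ − H^K p₋‖ ≤ √(d_max)·‖(I − L̃)^K − q₁q₁ᵀ‖·(‖D^{-1/2}p₊‖ + ‖D^{-1/2}p₋‖). -/
theorem diffusion_difference_spectral_bound
    (N : ℕ) (W : Matrix (Fin (N + 1)) (Fin (N + 1)) ℝ)
    (hsym : W.IsSymm) (hnn : ∀ i j, 0 ≤ W i j)
    (d : Fin (N + 1) → ℝ) (hd : ∀ j, d j = ∑ i, W i j)
    (hdpos : ∀ j, 0 < d j)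
    (H : Matrix (Fin (N + 1)) (Fin (N + 1)) ℝ)
    (hH : H = W * Matrix.diagonal (fun j => (d j)⁻¹))
    (vol : ℝ) (hvol : vol = ∑ j, d j)
    (Ltil : Matrix (Fin (N + 1)) (Fin (N + 1)) ℝ)
    (hLtil : Ltil = Matrix.diagonal (fun j => (Real.sqrt (d j))⁻¹) *
      (Matrix.diagonal d - W) * Matrix.diagonal (fun j => (Real.sqrt (d j))⁻¹))
    (q₁ : Fin (N + 1) → ℝ) (hq₁ : ∀ i, q₁ i = Real.sqrt (d i) / Real.sqrt vol)
    (dmax : ℝ) (hdmax : dmax = Finset.univ.sup' Finset.univ_nonempty d)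
    (pp pm : Fin (N + 1) → ℝ)
    (hppnn : ∀ i, 0 ≤ pp i) (hppsum : ∑ i, pp i = 1)
    (hpmnn : ∀ i, 0 ≤ pm i) (hpmsum : ∑ i, pm i = 1)
    (K : ℕ) (hK : 1 ≤ K) :
    eNorm ((H ^ K).mulVec pp - (H ^ K).mulVec pm) ≤
      Real.sqrt dmax * specNorm ((1 - Ltil) ^ K - Matrix.vecMulVec q₁ q₁) *
        (eNorm (fun i => (Real.sqrt (d i))⁻¹ * pp i) +
          eNorm (fun i => (Real.sqrt (d i))⁻¹ * pm i)) := by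
  have hsqpos : ∀ i, 0 < Real.sqrt (d i) := fun i => Real.sqrt_pos.mpr (hdpos i)
  set S : Matrix (Fin (N+1)) (Fin (N+1)) ℝ := Matrix.diagonal (fun i => Real.sqrt (d i)) with hS
  set S' : Matrix (Fin (N+1)) (Fin (N+1)) ℝ :=
    Matrix.diagonal (fun i => (Real.sqrt (d i))⁻¹) with hS'
  have hSS' : S * S' = 1 := by
    rw [hS, hS', Matrix.diagonal_mul_diagonal, ← Matrix.diagonal_one]
    exact congrArg Matrix.diagonal (funext fun i => mul_inv_cancel₀ (hsqpos i).ne')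
  have hS'S : S' * S = 1 := by
    rw [hS, hS', Matrix.diagonal_mul_diagonal, ← Matrix.diagonal_one]
    exact congrArg Matrix.diagonal (funext fun i => inv_mul_cancel₀ (hsqpos i).ne')
  have hS'S' : S' * S' = Matrix.diagonal (fun i => (d i)⁻¹) := by
    rw [hS', Matrix.diagonal_mul_diagonal]
    exact congrArg Matrix.diagonal (funext fun i => by
      rw [← mul_inv, Real.mul_self_sqrt (hdpos i).le])
  have h1L : (1 : Matrix (Fin (N+1)) (Fin (N+1)) ℝ) - Ltil = S' * W * S' := by
    have hD : S' * Matrix.diagonal d * S' = 1 := by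
      rw [hS', Matrix.diagonal_mul_diagonal, Matrix.diagonal_mul_diagonal,
        ← Matrix.diagonal_one]
      refine congrArg Matrix.diagonal (funext fun i => ?_)
      have h := Real.mul_self_sqrt (hdpos i).le
      have h2 := (hsqpos i).ne'
      field_simp
      rw [sq, h]
    rw [hLtil, Matrix.mul_sub, Matrix.sub_mul, hD]
    abel
  have hHconj : H = S * (1 - Ltil) * S' := by
    rw [h1L, hH]
    have h3 : S * (S' * W * S') * S' = (S * S') * W * (S' * S') := by noncomm_ring
    rw [h3, hSS', hS'S', one_mul]
  have hHK : H ^ K = S * (1 - Ltil) ^ K * S' := by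
    rw [hHconj]; exact conj_pow' S S' _ hSS' hS'S K
  set x : Fin (N+1) → ℝ := S'.mulVec pp - S'.mulVec pm with hx
  set M : Matrix (Fin (N+1)) (Fin (N+1)) ℝ := (1 - Ltil) ^ K - Matrix.vecMulVec q₁ q₁ with hM
  have hS'mv : ∀ p : Fin (N+1) → ℝ, S'.mulVec p = fun i => (Real.sqrt (d i))⁻¹ * p i := by
    intro p; funext i; rw [hS', Matrix.mulVec_diagonal]
  have hdot : q₁ ⬝ᵥ x = 0 := by
    have h1 : ∀ p : Fin (N+1) → ℝ, (∑ i, p i = 1) →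
        q₁ ⬝ᵥ S'.mulVec p = (Real.sqrt vol)⁻¹ := by
      intro p hp
      rw [hS'mv]
      unfold dotProduct
      have : ∀ i, q₁ i * ((Real.sqrt (d i))⁻¹ * p i) = (Real.sqrt vol)⁻¹ * p i := by
        intro i
        rw [hq₁ i, div_eq_mul_inv]
        field_simp [(hsqpos i).ne']
      simp only [this]
      rw [← Finset.mul_sum, hp, mul_one]
    rw [hx, dotProduct_sub, h1 pp hppsum, h1 pm hpmsum, sub_self]
  have hMx : M.mulVec x = ((1 - Ltil) ^ K).mulVec x := by
    rw [hM, Matrix.sub_mulVec]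
    have : (Matrix.vecMulVec q₁ q₁).mulVec x = 0 := by
      funext i
      simp only [Matrix.vecMulVec, Matrix.mulVec, dotProduct, Matrix.of_apply]
      have : ∑ j, q₁ i * q₁ j * x j = q₁ i * ∑ j, q₁ j * x j := by
        rw [Finset.mul_sum]; exact Finset.sum_congr rfl fun j _ => by ring
      rw [this]
      rw [show ∑ j, q₁ j * x j = q₁ ⬝ᵥ x from rfl, hdot, mul_zero]
      rfl
    rw [this, sub_zero]
  have hkey : (H ^ K).mulVec pp - (H ^ K).mulVec pm = S.mulVec (M.mulVec x) := by
    have hx2 : S'.mulVec (pp - pm) = x := by rw [hx, Matrix.mulVec_sub]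
    rw [hMx, ← Matrix.mulVec_sub, hHK, ← Matrix.mulVec_mulVec, ← Matrix.mulVec_mulVec, hx2]
  have hdmaxnn : 0 ≤ dmax := by
    rw [hdmax]
    exact le_trans (hdpos 0).le (Finset.le_sup' d (Finset.mem_univ 0))
  have hSbound : ∀ y : Fin (N+1) → ℝ, eNorm (S.mulVec y) ≤ Real.sqrt dmax * eNorm y := by
    intro y
    have hsum : ∑ i, (S.mulVec y) i ^ 2 ≤ dmax * ∑ i, y i ^ 2 := by
      rw [Finset.mul_sum]
      refine Finset.sum_le_sum fun i _ => ?_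
      rw [hS, Matrix.mulVec_diagonal, mul_pow, Real.sq_sqrt (hdpos i).le]
      have hdle : d i ≤ dmax := hdmax ▸ Finset.le_sup' d (Finset.mem_univ i)
      exact mul_le_mul_of_nonneg_right hdle (sq_nonneg _)
    calc eNorm (S.mulVec y) = Real.sqrt (∑ i, (S.mulVec y) i ^ 2) := rfl
      _ ≤ Real.sqrt (dmax * ∑ i, y i ^ 2) := Real.sqrt_le_sqrt hsum
      _ = Real.sqrt dmax * eNorm y := by rw [Real.sqrt_mul hdmaxnn]; rfl
  have hxb : eNorm x ≤ eNorm (fun i => (Real.sqrt (d i))⁻¹ * pp i)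
      + eNorm (fun i => (Real.sqrt (d i))⁻¹ * pm i) := by
    rw [hx, ← hS'mv pp, ← hS'mv pm]
    exact eNorm_sub_le _ _
  calc eNorm ((H ^ K).mulVec pp - (H ^ K).mulVec pm)
      = eNorm (S.mulVec (M.mulVec x)) := by rw [hkey]
    _ ≤ Real.sqrt dmax * eNorm (M.mulVec x) := hSbound _
    _ ≤ Real.sqrt dmax * (specNorm M * eNorm x) :=
        mul_le_mul_of_nonneg_left (specNorm_mulVec_le M x) (Real.sqrt_nonneg _)
    _ ≤ Real.sqrt dmax * (specNorm M * (eNorm (fun i => (Real.sqrt (d i))⁻¹ * pp i)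
          + eNorm (fun i => (Real.sqrt (d i))⁻¹ * pm i))) := by
        refine mul_le_mul_of_nonneg_left ?_ (Real.sqrt_nonneg _)
        exact mul_le_mul_of_nonneg_left hxb (specNorm_nonneg M)
    _ = Real.sqrt dmax * specNorm M * (eNorm (fun i => (Real.sqrt (d i))⁻¹ * pp i)
          + eNorm (fun i => (Real.sqrt (d i))⁻¹ * pm i)) := by ring
end

section
/- Let W be a symmetric N×N real matrix with nonnegative entries, positive degrees d_j := Σ_i W_{ij}, D := diag(d_1,…,d_N), H := W·D⁻¹, and L̃ := D^{-1/2}(D−W)D^{-1/2}. Suppose L̃ has an orthonormal eigenbasis q_1,…,q_N with eigenvalues 0 = μ_1 < μ_2 ≤ … ≤ μ_N (so the eigenvalue 0 is simple), and set μ' := min{μ_2, 2−μ_N}. Let L₊ and L₋ be nonempty subsets of {1,…,N} with uniform seed vectors p₊ := v_{L₊} and p₋ := v_{L₋}. Then for every positive integer K, ‖H^K p₊ − H^K p₋‖ ≤ (√(d_max/(d_min₋|L₋|)) + √(d_max/(d_min₊|L₊|))) · e^{−K·μ'}, where d_max := max_i d_i, d_min₊ := min_{i∈L₊} d_i, and d_min₋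 := min_{i∈L₋} d_i. -/
open Matrix Finset

namespace SeedAux
variable {n : ℕ}

lemma eNorm_nonneg (x : Fin n → ℝ) : 0 ≤ eNorm x := Real.sqrt_nonneg _

lemma eNorm_sub_le (a b : Fin n → ℝ) : eNorm (a - b) ≤ eNorm a + eNorm b := by
  have key : ∀ x : Fin n → ℝ, eNorm x = ‖(WithLp.equiv 2 (Fin n → ℝ)).symm x‖ := by
    intro x
    rw [EuclideanSpace.norm_eq]
    unfold eNorm
    congr 1
    refine Finset.sum_congr rfl fun i _ => ?_
    rw [Real.norm_eq_abs, sq_abs]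
    rfl
  rw [key, key, key]
  rw [show (WithLp.equiv 2 (Fin n → ℝ)).symm (a - b)
      = (WithLp.equiv 2 (Fin n → ℝ)).symm a - (WithLp.equiv 2 (Fin n → ℝ)).symm b from rfl]
  exact norm_sub_le _ _

lemma diag_mulVec (c z : Fin n → ℝ) : (Matrix.diagonal c) *ᵥ z = fun i => c i * z i := by
  ext i; rw [Matrix.mulVec_diagonal]

lemma eNorm_diag_le (c z : Fin n → ℝ) (M : ℝ) (hM : 0 ≤ M)
    (h : ∀ i, (c i * z i) ^ 2 ≤ M ^ 2 * z i ^ 2) :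
    eNorm ((Matrix.diagonal c) *ᵥ z) ≤ M * eNorm z := by
  rw [diag_mulVec]
  unfold eNorm
  have hsum : ∑ i, (c i * z i) ^ 2 ≤ M ^ 2 * ∑ i, z i ^ 2 := by
    rw [Finset.mul_sum]; exact Finset.sum_le_sum fun i _ => h i
  calc Real.sqrt (∑ i, (c i * z i) ^ 2) ≤ Real.sqrt (M ^ 2 * ∑ i, z i ^ 2) :=
        Real.sqrt_le_sqrt hsum
    _ = M * Real.sqrt (∑ i, z i ^ 2) := by
        rw [Real.sqrt_mul (sq_nonneg M), Real.sqrt_sq hM]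

lemma eNorm_orth (Q : Matrix (Fin n) (Fin n) ℝ) (h : Qᵀ * Q = 1) (z : Fin n → ℝ) :
    eNorm (Q *ᵥ z) = eNorm z := by
  unfold eNorm
  congr 1
  have h1 : ∀ w : Fin n → ℝ, ∑ i, w i ^ 2 = w ⬝ᵥ w := by
    intro w; simp [dotProduct, sq]
  rw [h1, h1, dotProduct_mulVec]
  have h2 : (Q *ᵥ z) ᵥ* Q = z := by
    rw [show Q *ᵥ z = z ᵥ* Qᵀ from (vecMul_transpose Q z).symm, vecMul_vecMul, h, vecMul_one]
  rw [h2]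

lemma sim_pow (R Ri A : Matrix (Fin n) (Fin n) ℝ) (h2 : R * Ri = 1) (h : Ri * R = 1)
    (k : ℕ) : (R * A * Ri) ^ k = R * A ^ k * Ri := by
  induction k with
  | zero => simp [h2]
  | succ k ih =>
      rw [pow_succ, ih, pow_succ]
      calc R * A ^ k * Ri * (R * A * Ri) = R * A ^ k * (Ri * R) * A * Ri := by
            simp only [mul_assoc]
        _ = R * (A ^ k * A) * Ri := by rw [h, mul_one]; simp only [mul_assoc]

lemma conj_pow (Q : Matrix (Fin n) (Fin n) ℝ) (hQtQ : Qᵀ * Q = 1) (hQQt : Q * Qᵀ = 1)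
    (ν : Fin n → ℝ) (k : ℕ) :
    (Q * Matrix.diagonal ν * Qᵀ) ^ k = Q * Matrix.diagonal (fun i => ν i ^ k) * Qᵀ := by
  induction k with
  | zero => simp [hQQt, Matrix.diagonal_one]
  | succ k ih =>
      rw [pow_succ, ih]
      calc Q * Matrix.diagonal (fun i => ν i ^ k) * Qᵀ * (Q * Matrix.diagonal ν * Qᵀ)
          = Q * (Matrix.diagonal (fun i => ν i ^ k) * ((Qᵀ * Q) * (Matrix.diagonal ν * Qᵀ))) := by
            simp only [mul_assoc]
        _ = Q * Matrix.diagonal (fun i => ν i ^ (k + 1)) * Qᵀ := by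
            rw [hQtQ, one_mul, ← mul_assoc (Matrix.diagonal _), Matrix.diagonal_mul_diagonal]
            simp only [← pow_succ, mul_assoc]

end SeedAux

open SeedAux

/-- spectral-gap bound on the distance between the K-step
diffusions of two seed vectors:
‖H^K p₊ − H^K p₋‖ ≤ (√(d_max/(d_min₋|L₋|)) + √(d_max/(d_min₊|L₊|)))·e^{−Kμ'}.
(N ≥ 2 is encoded by using matrices of size N+2.) -/
theorem seed_diffusion_spectral_gap_bound
    (N : ℕ) (W : Matrix (Fin (N + 2)) (Fin (N + 2)) ℝ)
    (hsym : W.IsSymm) (hnn : ∀ i j, 0 ≤ W i j)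
    (d : Fin (N + 2) → ℝ) (hd : ∀ j, d j = ∑ i, W i j)
    (hdpos : ∀ j, 0 < d j)
    (H : Matrix (Fin (N + 2)) (Fin (N + 2)) ℝ)
    (hH : H = W * Matrix.diagonal (fun j => (d j)⁻¹))
    (Ltil : Matrix (Fin (N + 2)) (Fin (N + 2)) ℝ)
    (hLtil : Ltil = Matrix.diagonal (fun j => (Real.sqrt (d j))⁻¹) *
      (Matrix.diagonal d - W) * Matrix.diagonal (fun j => (Real.sqrt (d j))⁻¹))
    -- orthonormal eigenbasis of L̃ with ordered eigenvalues, 0 simple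
    (q : Fin (N + 2) → (Fin (N + 2) → ℝ)) (μ : Fin (N + 2) → ℝ)
    (horth : ∀ i j, q i ⬝ᵥ q j = if i = j then 1 else 0)
    (heig : ∀ i, Ltil.mulVec (q i) = μ i • q i)
    (hmono : Monotone μ) (hμ0 : μ 0 = 0) (hsimple : ∀ i, i ≠ 0 → 0 < μ i)
    (μ' : ℝ) (hμ' : μ' = min (μ 1) (2 - μ (Fin.last (N + 1))))
    (dmax : ℝ) (hdmax : dmax = Finset.univ.sup' Finset.univ_nonempty d)
    (Lp Lm : Finset (Fin (N + 2))) (hLp : Lp.Nonempty) (hLm : Lm.Nonempty)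
    (pp pm : Fin (N + 2) → ℝ)
    (hpp : ∀ i, pp i = if i ∈ Lp then ((Lp.card : ℝ))⁻¹ else 0)
    (hpm : ∀ i, pm i = if i ∈ Lm then ((Lm.card : ℝ))⁻¹ else 0)
    (dminp dminm : ℝ) (hdminp : dminp = Lp.inf' hLp d) (hdminm : dminm = Lm.inf' hLm d)
    (K : ℕ) (hK : 1 ≤ K) :
    eNorm ((H ^ K).mulVec pp - (H ^ K).mulVec pm) ≤
      (Real.sqrt (dmax / (dminm * (Lm.card : ℝ))) +
        Real.sqrt (dmax / (dminp * (Lp.card : ℝ)))) * Real.exp (-(K : ℝ) * μ') := by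
  classical
  set Ri : Matrix (Fin (N + 2)) (Fin (N + 2)) ℝ :=
    Matrix.diagonal (fun j => (Real.sqrt (d j))⁻¹) with hRi
  set R : Matrix (Fin (N + 2)) (Fin (N + 2)) ℝ :=
    Matrix.diagonal (fun j => Real.sqrt (d j)) with hR
  set rv : Fin (N + 2) → ℝ := fun j => Real.sqrt (d j) with hrv
  have hrpos : ∀ j, 0 < rv j := fun j => Real.sqrt_pos.mpr (hdpos j)
  have hrr : ∀ j, rv j * rv j = d j := fun j => Real.mul_self_sqrt (hdpos j).le
  have hRRi : R * Ri = 1 := by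
    rw [hR, hRi, Matrix.diagonal_mul_diagonal]
    rw [show (fun i => rv i * (rv i)⁻¹) = fun _ : Fin (N + 2) => (1 : ℝ) from
      funext fun i => mul_inv_cancel₀ (hrpos i).ne', Matrix.diagonal_one]
  have hRiR : Ri * R = 1 := by
    rw [hR, hRi, Matrix.diagonal_mul_diagonal]
    rw [show (fun i => (rv i)⁻¹ * rv i) = fun _ : Fin (N + 2) => (1 : ℝ) from
      funext fun i => inv_mul_cancel₀ (hrpos i).ne', Matrix.diagonal_one]
  have hRiRi : Ri * Ri = Matrix.diagonal (fun j => (d j)⁻¹) := by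
    have hfun : (fun j => (Real.sqrt (d j))⁻¹ * (Real.sqrt (d j))⁻¹)
        = fun j => (d j)⁻¹ := funext fun j => by
      rw [← mul_inv, Real.mul_self_sqrt (hdpos j).le]
    rw [hRi, Matrix.diagonal_mul_diagonal, hfun]
  -- orthogonal matrix Q with columns q i
  set Q : Matrix (Fin (N + 2)) (Fin (N + 2)) ℝ := Matrix.of (fun j i => q i j) with hQ
  have hQapp : ∀ j i, Q j i = q i j := fun j i => rfl
  have hQtQ : Qᵀ * Q = 1 := by
    ext i j
    rw [Matrix.mul_apply, Matrix.one_apply, ← horth i j]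
    simp only [Matrix.transpose_apply, hQapp, dotProduct]
  have hQQt : Q * Qᵀ = 1 := mul_eq_one_comm.mp hQtQ
  -- spectral decomposition
  have hLQ : Ltil * Q = Q * Matrix.diagonal μ := by
    ext j i
    rw [Matrix.mul_apply, Matrix.mul_diagonal]
    have h := congrFun (heig i) j
    simp only [Matrix.mulVec, dotProduct, Pi.smul_apply, smul_eq_mul] at h
    calc ∑ k, Ltil j k * Q k i = ∑ k, Ltil j k * q i k := by
          simp only [hQapp]
      _ = μ i * q i j := h
      _ = Q j i * μ i := by rw [mul_comm, hQapp]
  have hspec : Ltil = Q * Matrix.diagonal μ * Qᵀ := by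
    have h := congrArg (· * Qᵀ) hLQ
    simpa only [mul_assoc, hQQt, mul_one] using h
  have hone : (1 : Matrix (Fin (N + 2)) (Fin (N + 2)) ℝ) - Ltil
      = Q * Matrix.diagonal (fun i => 1 - μ i) * Qᵀ := by
    have hd1 : Matrix.diagonal (fun i : Fin (N + 2) => 1 - μ i)
        = 1 - Matrix.diagonal μ := by
      rw [← Matrix.diagonal_one, ← Matrix.diagonal_sub]
    rw [hd1, hspec]
    simp only [Matrix.mul_sub, Matrix.sub_mul, mul_one, hQQt]
  -- similarity H = R (1 - Ltil) Ri
  have hRLR : R * Ltil * Ri = 1 - H := by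
    rw [hLtil, hH]
    calc R * (Ri * (Matrix.diagonal d - W) * Ri) * Ri
        = (R * Ri) * ((Matrix.diagonal d - W) * (Ri * Ri)) := by simp only [mul_assoc]
      _ = (Matrix.diagonal d - W) * Matrix.diagonal (fun j => (d j)⁻¹) := by
          rw [hRRi, hRiRi, one_mul]
      _ = 1 - W * Matrix.diagonal (fun j => (d j)⁻¹) := by
          rw [Matrix.sub_mul, Matrix.diagonal_mul_diagonal]
          rw [show (fun i => d i * (d i)⁻¹) = fun _ : Fin (N + 2) => (1 : ℝ) from
            funext fun i => mul_inv_cancel₀ (hdpos i).ne', Matrix.diagonal_one]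
  have hHsim : H = R * ((1 : Matrix (Fin (N + 2)) (Fin (N + 2)) ℝ) - Ltil) * Ri := by
    rw [Matrix.mul_sub, mul_one, Matrix.sub_mul, hRRi, hRLR]
    abel
  set ν : Fin (N + 2) → ℝ := fun i => (1 - μ i) ^ K with hν
  have hpowK : H ^ K = R * (Q * Matrix.diagonal ν * Qᵀ) * Ri := by
    rw [hHsim, SeedAux.sim_pow R Ri _ hRRi hRiR, hone, SeedAux.conj_pow Q hQtQ hQQt]
  -- vectors
  set xp : Fin (N + 2) → ℝ := Ri *ᵥ pp with hxp
  set xm : Fin (N + 2) → ℝ := Ri *ᵥ pm with hxm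
  set u : Fin (N + 2) → ℝ := Qᵀ *ᵥ (xp - xm) with hu
  have hvec : (H ^ K) *ᵥ pp - (H ^ K) *ᵥ pm
      = R *ᵥ (Q *ᵥ ((Matrix.diagonal ν) *ᵥ u)) := by
    rw [← Matrix.mulVec_sub, hpowK, hu]
    simp only [← Matrix.mulVec_mulVec, Matrix.mulVec_sub, hxp, hxm]
  -- dot products with rv
  have hrdot : ∀ (L : Finset (Fin (N + 2))) (p : Fin (N + 2) → ℝ),
      L.Nonempty → (∀ i, p i = if i ∈ L then ((L.card : ℝ))⁻¹ else 0) →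
      rv ⬝ᵥ (Ri *ᵥ p) = 1 := by
    intro L p hL hp
    have hcard0 : (0 : ℝ) < (L.card : ℝ) := by exact_mod_cast Finset.card_pos.mpr hL
    have h1 : rv ⬝ᵥ (Ri *ᵥ p) = ∑ j, p j := by
      rw [hRi, SeedAux.diag_mulVec]
      simp only [dotProduct]
      exact Finset.sum_congr rfl fun j _ => by
        rw [← mul_assoc, mul_inv_cancel₀ (hrpos j).ne', one_mul]
    rw [h1]
    calc ∑ j, p j = ∑ j ∈ Finset.univ ∩ L, ((L.card : ℝ))⁻¹ := by
          simp only [hp]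
          rw [Finset.sum_ite_mem]
      _ = 1 := by
          rw [Finset.univ_inter, Finset.sum_const, nsmul_eq_mul,
            mul_inv_cancel₀ hcard0.ne']
  -- Ltil annihilates rv
  have hLr : Ltil *ᵥ rv = 0 := by
    rw [hLtil]
    have h1 : Ri *ᵥ rv = fun _ => (1 : ℝ) := by
      rw [hRi, SeedAux.diag_mulVec]
      funext j
      exact inv_mul_cancel₀ (hrpos j).ne'
    have hW1 : W *ᵥ (fun _ => (1 : ℝ)) = d := by
      funext i
      simp only [Matrix.mulVec, dotProduct, mul_one]
      rw [hd i]
      exact Finset.sum_congr rfl fun j _ => (hsym.apply j i)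
    calc (Ri * (Matrix.diagonal d - W) * Ri) *ᵥ rv
        = Ri *ᵥ ((Matrix.diagonal d - W) *ᵥ (Ri *ᵥ rv)) := by
          simp only [Matrix.mulVec_mulVec, mul_assoc]
      _ = Ri *ᵥ ((Matrix.diagonal d - W) *ᵥ (fun _ => (1 : ℝ))) := by rw [h1]
      _ = 0 := by
          rw [Matrix.sub_mulVec, hW1]
          have hdd : (Matrix.diagonal d) *ᵥ (fun _ => (1 : ℝ)) = d := by
            rw [SeedAux.diag_mulVec]
            funext i
            rw [mul_one]
          rw [hdd, sub_self, Matrix.mulVec_zero]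
  -- coefficients of rv in the eigenbasis
  set a : Fin (N + 2) → ℝ := Qᵀ *ᵥ rv with ha
  have hQa : Q *ᵥ a = rv := by
    rw [ha, Matrix.mulVec_mulVec, hQQt, Matrix.one_mulVec]
  have hμa : Matrix.diagonal μ *ᵥ a = 0 := by
    have h0 : Q *ᵥ ((Matrix.diagonal μ) *ᵥ a) = 0 := by
      rw [ha, Matrix.mulVec_mulVec, Matrix.mulVec_mulVec, ← hspec, hLr]
    have h2 := congrArg (fun v => Qᵀ *ᵥ v) h0
    simp only [Matrix.mulVec_mulVec, Matrix.mulVec_zero, ← mul_assoc, hQtQ, one_mul] at h2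
    exact h2
  have ha0 : ∀ i, i ≠ 0 → a i = 0 := by
    intro i hi
    have h2 := congrFun hμa i
    rw [Matrix.mulVec_diagonal] at h2
    simp only [Pi.zero_apply] at h2
    rcases mul_eq_zero.mp h2 with h | h
    · exact absurd h (hsimple i hi).ne'
    · exact h
  have hra : ∀ j, rv j = a 0 * q 0 j := by
    intro j
    have h2 := congrFun hQa j
    rw [← h2]
    simp only [Matrix.mulVec, dotProduct]
    rw [Finset.sum_eq_single 0]
    · rw [mul_comm, hQapp]
    · intro i _ hi; rw [ha0 i hi, mul_zero]
    · intro h; exact absurd (Finset.mem_univ 0) h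
  have ha0ne : a 0 ≠ 0 := by
    intro h
    have h2 := hra 0
    rw [h, zero_mul] at h2
    exact (hrpos 0).ne' h2
  have hq0dot : ∀ x : Fin (N + 2) → ℝ, q 0 ⬝ᵥ x = (a 0)⁻¹ * (rv ⬝ᵥ x) := by
    intro x
    have h2 : rv ⬝ᵥ x = a 0 * (q 0 ⬝ᵥ x) := by
      simp only [dotProduct, Finset.mul_sum]
      exact Finset.sum_congr rfl fun j _ => by rw [hra j, mul_assoc]
    rw [h2, ← mul_assoc, inv_mul_cancel₀ ha0ne, one_mul]
  have hu0 : u 0 = 0 := by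
    have huq : u 0 = q 0 ⬝ᵥ (xp - xm) := by
      rw [hu]
      simp only [Matrix.mulVec, Matrix.transpose_apply, hQapp, dotProduct]
    rw [huq, dotProduct_sub, hq0dot, hq0dot, hxp, hxm,
      hrdot Lp pp hLp hpp, hrdot Lm pm hLm hpm, sub_self]
  -- spectral bounds on eigenvalues
  have hμ'le : ∀ i : Fin (N + 2), i ≠ 0 → |1 - μ i| ≤ 1 - μ' := by
    intro i hi
    have h01 : μ' ≤ μ 1 := hμ' ▸ min_le_left _ _
    have h02 : μ' ≤ 2 - μ (Fin.last (N + 1)) := hμ' ▸ min_le_right _ _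
    have h1i : μ 1 ≤ μ i := by
      apply hmono
      rw [Fin.le_def]
      have hvne : (i : ℕ) ≠ 0 := by intro h; apply hi; ext; simp [h]
      simp only [Fin.val_one]
      omega
    have hlast : μ i ≤ μ (Fin.last (N + 1)) := hmono (Fin.le_last i)
    rw [abs_le]
    constructor <;> linarith
  have hμ'1 : μ' ≤ 1 := by
    have h01 : μ' ≤ μ 1 := hμ' ▸ min_le_left _ _
    have h02 : μ' ≤ 2 - μ (Fin.last (N + 1)) := hμ' ▸ min_le_right _ _
    have h1l : μ 1 ≤ μ (Fin.last (N + 1)) := hmono (Fin.le_last 1)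
    linarith
  set E : ℝ := Real.exp (-(K : ℝ) * μ') with hE
  have hEpos : 0 < E := Real.exp_pos _
  have hνE : ∀ i : Fin (N + 2), i ≠ 0 → |ν i| ≤ E := by
    intro i hi
    have h1 : |ν i| = |1 - μ i| ^ K := by rw [hν]; exact abs_pow _ _
    have h2 : |1 - μ i| ^ K ≤ (1 - μ') ^ K :=
      pow_le_pow_left₀ (abs_nonneg _) (hμ'le i hi) K
    have h3 : (1 - μ') ^ K ≤ (Real.exp (-μ')) ^ K := by
      apply pow_le_pow_left₀ (by linarith)
      linarith [Real.add_one_le_exp (-μ')]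
    have h4 : (Real.exp (-μ')) ^ K = E := by
      rw [hE, ← Real.exp_nat_mul]
      congr 1
      ring
    rw [h1]
    calc |1 - μ i| ^ K ≤ (1 - μ') ^ K := h2
      _ ≤ (Real.exp (-μ')) ^ K := h3
      _ = E := h4
  have hDν : eNorm ((Matrix.diagonal ν) *ᵥ u) ≤ E * eNorm u := by
    apply SeedAux.eNorm_diag_le _ _ _ hEpos.le
    intro i
    by_cases hi : i = 0
    · rw [hi, hu0, mul_zero]
      simp
    · rw [mul_pow]
      apply mul_le_mul_of_nonneg_right _ (sq_nonneg _)
      calc ν i ^ 2 = |ν i| ^ 2 := (sq_abs _).symm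
        _ ≤ E ^ 2 := pow_le_pow_left₀ (abs_nonneg _) (hνE i hi) 2
  -- norms of the rescaled seed vectors
  have hseed : ∀ (L : Finset (Fin (N + 2))) (p : Fin (N + 2) → ℝ) (hL : L.Nonempty),
      (∀ i, p i = if i ∈ L then ((L.card : ℝ))⁻¹ else 0) → ∀ dm : ℝ,
      dm = L.inf' hL d →
      eNorm (Ri *ᵥ p) ≤ Real.sqrt ((dm * (L.card : ℝ))⁻¹) := by
    intro L p hL hp dm hdm
    have hcard0 : (0 : ℝ) < (L.card : ℝ) := by exact_mod_cast Finset.card_pos.mpr hL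
    obtain ⟨j₀, hj₀, hj₀eq⟩ := Finset.exists_mem_eq_inf' hL d
    have hdm0 : 0 < dm := by rw [hdm, hj₀eq]; exact hdpos j₀
    have hterm : ∀ j : Fin (N + 2), ((Ri *ᵥ p) j) ^ 2
        = if j ∈ L then (d j)⁻¹ * ((L.card : ℝ))⁻¹ ^ 2 else 0 := by
      intro j
      rw [hRi, Matrix.mulVec_diagonal, hp j]
      by_cases hj : j ∈ L
      · simp only [hj, if_true]
        rw [mul_pow, inv_pow, sq, hrr]
      · simp only [hj, if_false, mul_zero]
        exact zero_pow two_ne_zero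
    have hsum : ∑ j, ((Ri *ᵥ p) j) ^ 2 ≤ (dm * (L.card : ℝ))⁻¹ := by
      calc ∑ j, ((Ri *ᵥ p) j) ^ 2
          = ∑ j ∈ Finset.univ ∩ L, (d j)⁻¹ * ((L.card : ℝ))⁻¹ ^ 2 := by
            simp only [hterm]
            rw [Finset.sum_ite_mem]
        _ ≤ ∑ _j ∈ Finset.univ ∩ L, dm⁻¹ * ((L.card : ℝ))⁻¹ ^ 2 := by
            apply Finset.sum_le_sum
            intro j hj
            rw [Finset.univ_inter] at hj
            have hle : dm ≤ d j := by rw [hdm]; exact Finset.inf'_le d hj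
            exact mul_le_mul_of_nonneg_right
              (inv_anti₀ hdm0 hle) (sq_nonneg _)
        _ = (dm * (L.card : ℝ))⁻¹ := by
            rw [Finset.univ_inter, Finset.sum_const, nsmul_eq_mul, mul_inv]
            linear_combination (dm⁻¹ * (L.card:ℝ)⁻¹) * mul_inv_cancel₀ hcard0.ne'
    calc eNorm (Ri *ᵥ p) = Real.sqrt (∑ j, ((Ri *ᵥ p) j) ^ 2) := rfl
      _ ≤ Real.sqrt ((dm * (L.card : ℝ))⁻¹) := Real.sqrt_le_sqrt hsum
  have hxpn : eNorm xp ≤ Real.sqrt ((dminp * (Lp.card : ℝ))⁻¹) :=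
    hseed Lp pp hLp hpp dminp hdminp
  have hxmn : eNorm xm ≤ Real.sqrt ((dminm * (Lm.card : ℝ))⁻¹) :=
    hseed Lm pm hLm hpm dminm hdminm
  -- dmax facts
  have hdmax0 : 0 ≤ dmax := by
    rw [hdmax]
    exact le_trans (hdpos 0).le (Finset.le_sup' d (Finset.mem_univ 0))
  have hRop : ∀ w : Fin (N + 2) → ℝ, eNorm (R *ᵥ w) ≤ Real.sqrt dmax * eNorm w := by
    intro w
    rw [hR]
    apply SeedAux.eNorm_diag_le _ _ _ (Real.sqrt_nonneg _)
    intro i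
    rw [mul_pow, Real.sq_sqrt hdmax0]
    have h5 : Real.sqrt (d i) ^ 2 = d i := Real.sq_sqrt (hdpos i).le
    rw [h5]
    apply mul_le_mul_of_nonneg_right _ (sq_nonneg _)
    rw [hdmax]
    exact Finset.le_sup' d (Finset.mem_univ i)
  have hQt_orth : (Qᵀ)ᵀ * Qᵀ = 1 := by rw [Matrix.transpose_transpose, hQQt]
  -- final chain
  rw [show (H ^ K).mulVec pp - (H ^ K).mulVec pm
      = R *ᵥ (Q *ᵥ ((Matrix.diagonal ν) *ᵥ u)) from hvec]
  have hun : eNorm u = eNorm (xp - xm) := by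
    rw [hu]; exact SeedAux.eNorm_orth Qᵀ hQt_orth _
  calc eNorm (R *ᵥ (Q *ᵥ ((Matrix.diagonal ν) *ᵥ u)))
      ≤ Real.sqrt dmax * eNorm (Q *ᵥ ((Matrix.diagonal ν) *ᵥ u)) := hRop _
    _ = Real.sqrt dmax * eNorm ((Matrix.diagonal ν) *ᵥ u) := by
        rw [SeedAux.eNorm_orth Q hQtQ]
    _ ≤ Real.sqrt dmax * (E * eNorm u) :=
        mul_le_mul_of_nonneg_left hDν (Real.sqrt_nonneg _)
    _ = Real.sqrt dmax * E * eNorm (xp - xm) := by rw [hun]; ring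
    _ ≤ Real.sqrt dmax * E * (eNorm xp + eNorm xm) := by
        apply mul_le_mul_of_nonneg_left (SeedAux.eNorm_sub_le xp xm)
        positivity
    _ ≤ Real.sqrt dmax * E *
        (Real.sqrt ((dminp * (Lp.card : ℝ))⁻¹) + Real.sqrt ((dminm * (Lm.card : ℝ))⁻¹)) := by
        apply mul_le_mul_of_nonneg_left (add_le_add hxpn hxmn)
        positivity
    _ = (Real.sqrt (dmax / (dminm * (Lm.card : ℝ)))
        + Real.sqrt (dmax / (dminp * (Lp.card : ℝ)))) * E := by
        rw [div_eq_mul_inv, div_eq_mul_inv, Real.sqrt_mul hdmax0, Real.sqrt_mul hdmax0]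
        ring
end

section
/- (Theorem 1) Let W be a symmetric N×N real matrix with nonnegative entries, positive degrees d_j := Σ_i W_{ij}, D := diag(d_1,…,d_N), H := W·D⁻¹, and L̃ := D^{-1/2}(D−W)D^{-1/2}. Suppose L̃ has an orthonormal eigenbasis with eigenvalues 0 = μ_1 < μ_2 ≤ … ≤ μ_N < 2 (eigenvalue 0 simple), and set μ' := min{μ_2, 2−μ_N} > 0. Let L₊, L₋ be nonempty subsets of {1,…,N} with seeds p₊ := v_{L₊}, p₋ := v_{L₋}, and let γ > 0. If the positive integer K satisfies K ≥ (1/μ')·log[(2√(d_max)/γ)·(1/√(d_min₋|L₋|) + 1/√(d_min₊|L₊|))], then for every θ in the probability simplex S^K, the outputs y := Σ_{k=1}^K θ_k·H^k(p₊ − p₋) and y̌ := Σ_{k=1}^{K−1} θ_k·H^k(p₊ − p₋) + θ_K·H^{K+1}(p₊ − p₋) satisfy ‖y − y̌‖ ≤ γ; here d_max := max_i d_i, d_min₊ := min_{i∈L₊} d_i, d_min₋ := min_{i∈L₋} d_i. -/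
open Matrix Finset

/-- Theorem 1: if
K ≥ (1/μ')·log[(2√(d_max)/γ)·(1/√(d_min₋|L₋|) + 1/√(d_min₊|L₊|))],
then for every θ in the probability simplex (over indices 1,…,K), the outputs
y = Σ_{k=1}^K θ_k H^k(p₊−p₋) and
y̌ = Σ_{k=1}^{K−1} θ_k H^k(p₊−p₋) + θ_K H^{K+1}(p₊−p₋)
satisfy ‖y − y̌‖ ≤ γ.  (N ≥ 2 is encoded by using matrices of size N+2.) -/
theorem gamma_distinguishability_threshold_bound
    (N : ℕ) (W : Matrix (Fin (N + 2)) (Fin (N + 2)) ℝ)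
    (hsym : W.IsSymm) (hnn : ∀ i j, 0 ≤ W i j)
    (d : Fin (N + 2) → ℝ) (hd : ∀ j, d j = ∑ i, W i j)
    (hdpos : ∀ j, 0 < d j)
    (H : Matrix (Fin (N + 2)) (Fin (N + 2)) ℝ)
    (hH : H = W * Matrix.diagonal (fun j => (d j)⁻¹))
    (Ltil : Matrix (Fin (N + 2)) (Fin (N + 2)) ℝ)
    (hLtil : Ltil = Matrix.diagonal (fun j => (Real.sqrt (d j))⁻¹) *
      (Matrix.diagonal d - W) * Matrix.diagonal (fun j => (Real.sqrt (d j))⁻¹))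
    (q : Fin (N + 2) → (Fin (N + 2) → ℝ)) (μ : Fin (N + 2) → ℝ)
    (horth : ∀ i j, q i ⬝ᵥ q j = if i = j then 1 else 0)
    (heig : ∀ i, Ltil.mulVec (q i) = μ i • q i)
    (hmono : Monotone μ) (hμ0 : μ 0 = 0) (hsimple : ∀ i, i ≠ 0 → 0 < μ i)
    (hμlt2 : ∀ i, μ i < 2)
    (μ' : ℝ) (hμ' : μ' = min (μ 1) (2 - μ (Fin.last (N + 1))))
    (dmax : ℝ) (hdmax : dmax = Finset.univ.sup' Finset.univ_nonempty d)
    (Lp Lm : Finset (Fin (N + 2))) (hLp : Lp.Nonempty) (hLm : Lm.Nonempty)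
    (pp pm : Fin (N + 2) → ℝ)
    (hpp : ∀ i, pp i = if i ∈ Lp then ((Lp.card : ℝ))⁻¹ else 0)
    (hpm : ∀ i, pm i = if i ∈ Lm then ((Lm.card : ℝ))⁻¹ else 0)
    (dminp dminm : ℝ) (hdminp : dminp = Lp.inf' hLp d) (hdminm : dminm = Lm.inf' hLm d)
    (γ : ℝ) (hγ : 0 < γ)
    (K : ℕ) (hK : 1 ≤ K)
    (hKbound : (K : ℝ) ≥ (1 / μ') *
      Real.log ((2 * Real.sqrt dmax / γ) *
        (1 / Real.sqrt (dminm * (Lm.card : ℝ)) + 1 / Real.sqrt (dminp * (Lp.card : ℝ)))))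
    (θ : ℕ → ℝ) (hθnn : ∀ k ∈ Finset.Icc 1 K, 0 ≤ θ k)
    (hθsum : ∑ k ∈ Finset.Icc 1 K, θ k = 1) :
    eNorm ((∑ k ∈ Finset.Icc 1 K, θ k • (H ^ k).mulVec (pp - pm)) -
      ((∑ k ∈ Finset.Icc 1 (K - 1), θ k • (H ^ k).mulVec (pp - pm)) +
        θ K • (H ^ (K + 1)).mulVec (pp - pm))) ≤ γ := by
  have hd0 : ∀ j, (0:ℝ) ≤ d j := fun j => (hdpos j).le
  have hsqrt_pos : ∀ j, 0 < Real.sqrt (d j) := fun j => Real.sqrt_pos.mpr (hdpos j)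
  set S : Matrix (Fin (N+2)) (Fin (N+2)) ℝ :=
    Matrix.diagonal (fun j => Real.sqrt (d j)) with hSdef
  set Si : Matrix (Fin (N+2)) (Fin (N+2)) ℝ :=
    Matrix.diagonal (fun j => (Real.sqrt (d j))⁻¹) with hSidef
  have hSSi : S * Si = 1 := by
    rw [hSdef, hSidef, Matrix.diagonal_mul_diagonal]
    rw [show (fun j => Real.sqrt (d j) * (Real.sqrt (d j))⁻¹) = fun _ => (1:ℝ) from
      funext fun j => mul_inv_cancel₀ (hsqrt_pos j).ne', Matrix.diagonal_one]
  have hSiS : Si * S = 1 := mul_eq_one_comm.mp hSSi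
  have hSiSi : Si * Si = Matrix.diagonal (fun j => (d j)⁻¹) := by
    rw [hSidef, Matrix.diagonal_mul_diagonal]
    refine congrArg Matrix.diagonal (funext fun j => ?_)
    rw [← mul_inv, Real.mul_self_sqrt (hd0 j)]
  set M : Matrix (Fin (N+2)) (Fin (N+2)) ℝ := 1 - Ltil with hMdef
  have hHdecomp : H = S * M * Si := by
    have h1 : S * Ltil * Si = 1 - H := by
      rw [hLtil]
      rw [show S * (Si * (Matrix.diagonal d - W) * Si) * Si
          = (S * Si) * ((Matrix.diagonal d - W) * (Si * Si)) by
        simp only [Matrix.mul_assoc]]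
      rw [hSSi, hSiSi, one_mul, Matrix.sub_mul, Matrix.diagonal_mul_diagonal]
      rw [show (fun i => d i * (d i)⁻¹) = fun _ => (1:ℝ) from
        funext fun j => mul_inv_cancel₀ (hdpos j).ne', Matrix.diagonal_one, ← hH]
    rw [hMdef, Matrix.mul_sub, Matrix.sub_mul, Matrix.mul_one, hSSi, h1]
    abel
  have hHk : ∀ k : ℕ, H ^ k = S * M ^ k * Si := by
    intro k; induction k with
    | zero => simp [hSSi]
    | succ k ih =>
      rw [pow_succ, ih, hHdecomp, pow_succ]
      rw [show S * M ^ k * Si * (S * M * Si) = S * M ^ k * (Si * S) * (M * Si) by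
        simp only [Matrix.mul_assoc], hSiS, Matrix.mul_one]
      simp only [Matrix.mul_assoc]
  have hMq : ∀ i, M.mulVec (q i) = (1 - μ i) • q i := by
    intro i
    rw [hMdef, Matrix.sub_mulVec, Matrix.one_mulVec, heig, sub_smul, one_smul]
  have hMkq : ∀ (k : ℕ) i, (M ^ k).mulVec (q i) = ((1 - μ i) ^ k) • q i := by
    intro k i; induction k with
    | zero => simp
    | succ k ih =>
      rw [pow_succ, ← Matrix.mulVec_mulVec, hMq, Matrix.mulVec_smul, ih, smul_smul,
        ← pow_succ']
  set Q : Matrix (Fin (N+2)) (Fin (N+2)) ℝ := Matrix.of q with hQdef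
  have hQQt : Q * Qᵀ = 1 := by
    ext i j
    have := horth i j
    simpa [Matrix.mul_apply, Matrix.one_apply, dotProduct, hQdef,
      Matrix.of_apply, Matrix.transpose_apply] using this
  have hQtQ : Qᵀ * Q = 1 := mul_eq_one_comm.mp hQQt
  set u : Fin (N+2) → ℝ := Si.mulVec (pp - pm) with hudef
  set c : Fin (N+2) → ℝ := Q.mulVec u with hcdef
  have hu : u = Qᵀ.mulVec c := by
    rw [hcdef, Matrix.mulVec_mulVec, hQtQ, Matrix.one_mulVec]
  have husum : u = ∑ i, c i • q i := by
    rw [hu]; funext j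
    simp [Matrix.mulVec, dotProduct, Finset.sum_apply, hQdef, mul_comm]
  have hMku : ∀ k : ℕ, (M ^ k).mulVec u = ∑ i, (c i * (1 - μ i) ^ k) • q i := by
    intro k
    rw [husum]
    rw [show (M ^ k).mulVec (∑ i, c i • q i) = ∑ i, c i • (M ^ k).mulVec (q i) by
      simp only [← Matrix.mulVecLin_apply, map_sum, _root_.map_smul]]
    refine Finset.sum_congr rfl fun i _ => ?_
    rw [hMkq, smul_smul]
  set a : Fin (N+2) → ℝ := fun i => c i * ((1 - μ i) ^ K - (1 - μ i) ^ (K + 1)) with hadef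
  have hdiff : (M ^ K).mulVec u - (M ^ (K + 1)).mulVec u = Qᵀ.mulVec a := by
    rw [hMku K, hMku (K+1), ← Finset.sum_sub_distrib]
    funext j
    simp only [Finset.sum_apply, Pi.sub_apply, Pi.smul_apply, smul_eq_mul,
      Matrix.mulVec, dotProduct, Matrix.transpose_apply, hQdef, Matrix.of_apply, hadef]
    refine Finset.sum_congr rfl fun i _ => ?_
    ring
  -- the vector whose norm we bound
  have hvec : (∑ k ∈ Finset.Icc 1 K, θ k • (H ^ k).mulVec (pp - pm)) -
      ((∑ k ∈ Finset.Icc 1 (K - 1), θ k • (H ^ k).mulVec (pp - pm)) +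
        θ K • (H ^ (K + 1)).mulVec (pp - pm))
      = θ K • S.mulVec (Qᵀ.mulVec a) := by
    have hsplit : ∑ k ∈ Finset.Icc 1 K, θ k • (H ^ k).mulVec (pp - pm)
        = (∑ k ∈ Finset.Icc 1 (K - 1), θ k • (H ^ k).mulVec (pp - pm)) +
          θ K • (H ^ K).mulVec (pp - pm) := by
      conv_lhs => rw [show K = (K - 1) + 1 by omega]
      rw [Finset.sum_Icc_succ_top (by omega)]
      rw [show K - 1 + 1 = K by omega]
    rw [hsplit]
    have hHkx : ∀ k : ℕ, (H ^ k).mulVec (pp - pm) = S.mulVec ((M ^ k).mulVec u) := by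
      intro k
      rw [hudef, Matrix.mulVec_mulVec, Matrix.mulVec_mulVec, hHk k,
        Matrix.mul_assoc]
    rw [hHkx K, hHkx (K+1)]
    rw [show (∑ k ∈ Finset.Icc 1 (K - 1), θ k • (H ^ k).mulVec (pp - pm)) +
          θ K • S.mulVec ((M ^ K).mulVec u) -
        ((∑ k ∈ Finset.Icc 1 (K - 1), θ k • (H ^ k).mulVec (pp - pm)) +
          θ K • S.mulVec ((M ^ (K+1)).mulVec u))
        = θ K • (S.mulVec ((M ^ K).mulVec u) - S.mulVec ((M ^ (K+1)).mulVec u)) by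
      rw [smul_sub]; abel]
    rw [← Matrix.mulVec_sub, hdiff]
  rw [hvec]
  clear_value S Si M Q u c a
  -- basic positivity facts
  have hμ'pos : 0 < μ' := by
    rw [hμ']
    refine lt_min (hsimple 1 ?_) (by linarith [hμlt2 (Fin.last (N+1))])
    exact one_ne_zero
  have hμ'le1 : μ' ≤ 1 := by
    have h1 : μ' ≤ μ 1 := hμ' ▸ min_le_left _ _
    have h2 : μ' ≤ 2 - μ (Fin.last (N+1)) := hμ' ▸ min_le_right _ _
    have h3 : μ 1 ≤ μ (Fin.last (N+1)) := hmono (Fin.le_last 1)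
    linarith
  have hdmaxj : ∀ j, d j ≤ dmax := fun j => hdmax ▸ Finset.le_sup' d (Finset.mem_univ j)
  have hdmaxpos : 0 < dmax := lt_of_lt_of_le (hdpos 0) (hdmaxj 0)
  have hdminppos : 0 < dminp := by
    obtain ⟨i, hi, hieq⟩ := Finset.exists_mem_eq_inf' hLp d
    rw [hdminp, hieq]; exact hdpos i
  have hdminmpos : 0 < dminm := by
    obtain ⟨i, hi, hieq⟩ := Finset.exists_mem_eq_inf' hLm d
    rw [hdminm, hieq]; exact hdpos i
  have hLpcard : (0:ℝ) < (Lp.card : ℝ) := by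
    exact_mod_cast Finset.card_pos.mpr hLp
  have hLmcard : (0:ℝ) < (Lm.card : ℝ) := by
    exact_mod_cast Finset.card_pos.mpr hLm
  have hθK0 : 0 ≤ θ K := hθnn K (by simp [Finset.mem_Icc]; omega)
  have hθK1 : θ K ≤ 1 := by
    rw [← hθsum]
    exact Finset.single_le_sum hθnn (by simp [Finset.mem_Icc]; omega)
  set P : ℝ := (1 - μ') ^ K with hPdef
  have hPnn : 0 ≤ P := pow_nonneg (by linarith) K
  set Am : ℝ := (dminm * (Lm.card : ℝ))⁻¹ with hAmdef
  set Ap : ℝ := (dminp * (Lp.card : ℝ))⁻¹ with hApdef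
  have hAmpos : 0 < Am := by
    rw [hAmdef]; exact inv_pos.mpr (mul_pos hdminmpos hLmcard)
  have hAppos : 0 < Ap := by
    rw [hApdef]; exact inv_pos.mpr (mul_pos hdminppos hLpcard)
  clear_value P Am Ap
  -- bound on the coefficient factors
  have hb : ∀ i, |(1 - μ i) ^ K - (1 - μ i) ^ (K + 1)| ≤ 2 * P := by
    intro i
    by_cases hi : i = 0
    · simp only [hi, hμ0, sub_zero, one_pow, sub_self, abs_zero]
      linarith
    · have hμi1 : μ' ≤ μ i := by
        have : μ' ≤ μ 1 := hμ' ▸ min_le_left _ _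
        have h1le : (1 : Fin (N+2)) ≤ i := by
          have hvne : i.val ≠ 0 := fun h => hi (Fin.ext (by simp [h]))
          rw [Fin.le_def, Fin.val_one]
          omega
        exact le_trans this (hmono h1le)
      have hμi2 : μ i ≤ 2 - μ' := by
        have h2 : μ' ≤ 2 - μ (Fin.last (N+1)) := hμ' ▸ min_le_right _ _
        have h3 : μ i ≤ μ (Fin.last (N+1)) := hmono (Fin.le_last i)
        linarith
      have hkey : (1 - μ i) ^ K - (1 - μ i) ^ (K + 1) = (1 - μ i) ^ K * μ i := by
        rw [pow_succ]; ring
      rw [hkey, abs_mul, abs_pow]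
      have h1 : |1 - μ i| ≤ 1 - μ' := abs_le.mpr ⟨by linarith, by linarith⟩
      have h2 : |μ i| ≤ 2 := abs_le.mpr ⟨by linarith [hsimple i hi], (hμlt2 i).le⟩
      calc |1 - μ i| ^ K * |μ i| ≤ (1 - μ') ^ K * 2 := by
            exact mul_le_mul (pow_le_pow_left₀ (abs_nonneg _) h1 K) h2 (abs_nonneg _)
              (pow_nonneg (by linarith) K)
        _ = 2 * P := by rw [hPdef]; ring
  -- Parseval-type identities
  have hpars : ∀ v : Fin (N+2) → ℝ, ∑ j, (Qᵀ.mulVec v) j ^ 2 = ∑ i, v i ^ 2 := by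
    intro v
    have h1 : ∑ j, (Qᵀ.mulVec v) j ^ 2 = (Qᵀ.mulVec v) ⬝ᵥ (Qᵀ.mulVec v) := by
      simp [dotProduct, sq]
    have h2 : ∑ i, v i ^ 2 = v ⬝ᵥ v := by simp [dotProduct, sq]
    rw [h1, h2, Matrix.dotProduct_mulVec, Matrix.vecMul_transpose,
      Matrix.mulVec_mulVec, hQQt, Matrix.one_mulVec]
  have hcsq : ∑ i, c i ^ 2 = ∑ j, u j ^ 2 := by
    conv_rhs => rw [hu]
    exact (hpars c).symm
  -- bound on ∑ u², via seeds
  have husq : ∑ j, u j ^ 2 ≤ Am + Ap := by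
    have hptwise : ∀ j, u j ^ 2 ≤ pm j ^ 2 / d j + pp j ^ 2 / d j := by
      intro j
      have huj : u j = (Real.sqrt (d j))⁻¹ * (pp j - pm j) := by
        rw [hudef, hSidef, Matrix.mulVec_diagonal]
        simp
      have hppj : 0 ≤ pp j := by
        rw [hpp]; split
        · exact inv_nonneg.mpr (Nat.cast_nonneg _)
        · exact le_refl _
      have hpmj : 0 ≤ pm j := by
        rw [hpm]; split
        · exact inv_nonneg.mpr (Nat.cast_nonneg _)
        · exact le_refl _
      have hsq : ((Real.sqrt (d j))⁻¹) ^ 2 = (d j)⁻¹ := by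
        rw [← Real.sqrt_inv, Real.sq_sqrt (inv_nonneg.mpr (hd0 j))]
      rw [huj, mul_pow, hsq]
      have h1 : (pp j - pm j) ^ 2 ≤ pp j ^ 2 + pm j ^ 2 := by
        have h := mul_nonneg hppj hpmj
        calc (pp j - pm j) ^ 2 = pp j ^ 2 + pm j ^ 2 - 2 * (pp j * pm j) := by ring
          _ ≤ pp j ^ 2 + pm j ^ 2 := by linarith
      calc (d j)⁻¹ * (pp j - pm j) ^ 2 ≤ (d j)⁻¹ * (pp j ^ 2 + pm j ^ 2) :=
            mul_le_mul_of_nonneg_left h1 (inv_nonneg.mpr (hd0 j))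
        _ = pm j ^ 2 / d j + pp j ^ 2 / d j := by
            rw [← add_div, div_eq_mul_inv, mul_comm]
            ring
    calc ∑ j, u j ^ 2 ≤ ∑ j, (pm j ^ 2 / d j + pp j ^ 2 / d j) :=
          Finset.sum_le_sum fun j _ => hptwise j
      _ = (∑ j, pm j ^ 2 / d j) + ∑ j, pp j ^ 2 / d j := Finset.sum_add_distrib
      _ ≤ Am + Ap := by
          have hm : ∑ j, pm j ^ 2 / d j ≤ Am := by
            have : ∀ j, pm j ^ 2 / d j
                = if j ∈ Lm then ((Lm.card:ℝ))⁻¹ ^ 2 / d j else 0 := by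
              intro j; rw [hpm]; split <;> simp
            rw [Finset.sum_congr rfl fun j _ => this j, Finset.sum_ite_mem,
              Finset.univ_inter]
            calc ∑ j ∈ Lm, ((Lm.card:ℝ))⁻¹ ^ 2 / d j
                ≤ ∑ j ∈ Lm, ((Lm.card:ℝ))⁻¹ ^ 2 / dminm := by
                  refine Finset.sum_le_sum fun j hj => ?_
                  exact div_le_div_of_nonneg_left (sq_nonneg _) hdminmpos
                    (hdminm ▸ Finset.inf'_le d hj)
              _ = Am := by
                  rw [Finset.sum_const, nsmul_eq_mul, hAmdef]
                  have hc : (Lm.card:ℝ) ≠ 0 := hLmcard.ne'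
                  rw [mul_inv, div_eq_mul_inv, sq, ← mul_assoc, ← mul_assoc,
                    mul_inv_cancel₀ hc, one_mul, mul_comm]
          have hp : ∑ j, pp j ^ 2 / d j ≤ Ap := by
            have : ∀ j, pp j ^ 2 / d j
                = if j ∈ Lp then ((Lp.card:ℝ))⁻¹ ^ 2 / d j else 0 := by
              intro j; rw [hpp]; split <;> simp
            rw [Finset.sum_congr rfl fun j _ => this j, Finset.sum_ite_mem,
              Finset.univ_inter]
            calc ∑ j ∈ Lp, ((Lp.card:ℝ))⁻¹ ^ 2 / d j
                ≤ ∑ j ∈ Lp, ((Lp.card:ℝ))⁻¹ ^ 2 / dminp := by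
                  refine Finset.sum_le_sum fun j hj => ?_
                  exact div_le_div_of_nonneg_left (sq_nonneg _) hdminppos
                    (hdminp ▸ Finset.inf'_le d hj)
              _ = Ap := by
                  rw [Finset.sum_const, nsmul_eq_mul, hApdef]
                  have hc : (Lp.card:ℝ) ≠ 0 := hLpcard.ne'
                  rw [mul_inv, div_eq_mul_inv, sq, ← mul_assoc, ← mul_assoc,
                    mul_inv_cancel₀ hc, one_mul, mul_comm]
          linarith
  -- the full sum-of-squares bound
  have hsumsq : ∑ j, (θ K • S.mulVec (Qᵀ.mulVec a)) j ^ 2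
      ≤ dmax * (4 * P ^ 2) * (Am + Ap) := by
    have hzj : ∀ j, (θ K • S.mulVec (Qᵀ.mulVec a)) j ^ 2
        = θ K ^ 2 * (d j * (Qᵀ.mulVec a) j ^ 2) := by
      intro j
      have : (S.mulVec (Qᵀ.mulVec a)) j = Real.sqrt (d j) * (Qᵀ.mulVec a) j := by
        rw [hSdef, Matrix.mulVec_diagonal]

      rw [Pi.smul_apply, smul_eq_mul, this, mul_pow, mul_pow,
        Real.sq_sqrt (hd0 j)]
    calc ∑ j, (θ K • S.mulVec (Qᵀ.mulVec a)) j ^ 2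
        = θ K ^ 2 * ∑ j, d j * (Qᵀ.mulVec a) j ^ 2 := by
          rw [Finset.mul_sum]; exact Finset.sum_congr rfl fun j _ => hzj j
      _ ≤ 1 * ∑ j, d j * (Qᵀ.mulVec a) j ^ 2 := by
          refine mul_le_mul_of_nonneg_right ?_ ?_
          · exact pow_le_one₀ hθK0 hθK1
          · exact Finset.sum_nonneg fun j _ => mul_nonneg (hd0 j) (sq_nonneg _)
      _ = ∑ j, d j * (Qᵀ.mulVec a) j ^ 2 := one_mul _
      _ ≤ ∑ j, dmax * (Qᵀ.mulVec a) j ^ 2 :=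
          Finset.sum_le_sum fun j _ =>
            mul_le_mul_of_nonneg_right (hdmaxj j) (sq_nonneg _)
      _ = dmax * ∑ j, (Qᵀ.mulVec a) j ^ 2 := by rw [Finset.mul_sum]
      _ = dmax * ∑ i, a i ^ 2 := by rw [hpars a]
      _ ≤ dmax * ((4 * P ^ 2) * ∑ i, c i ^ 2) := by
          refine mul_le_mul_of_nonneg_left ?_ hdmaxpos.le
          rw [Finset.mul_sum]
          refine Finset.sum_le_sum fun i _ => ?_
          have h1 : a i ^ 2 = c i ^ 2 * ((1 - μ i) ^ K - (1 - μ i) ^ (K+1)) ^ 2 := by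
            rw [hadef]; ring
          have h2 : ((1 - μ i) ^ K - (1 - μ i) ^ (K+1)) ^ 2 ≤ (2 * P) ^ 2 :=
            sq_le_sq' (abs_le.mp (hb i)).1 (abs_le.mp (hb i)).2
          calc a i ^ 2 = c i ^ 2 * ((1 - μ i) ^ K - (1 - μ i) ^ (K+1)) ^ 2 := h1
            _ ≤ c i ^ 2 * (2 * P) ^ 2 :=
                mul_le_mul_of_nonneg_left h2 (sq_nonneg _)
            _ = 4 * P ^ 2 * c i ^ 2 := by ring
      _ ≤ dmax * ((4 * P ^ 2) * (Am + Ap)) := by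
          refine mul_le_mul_of_nonneg_left ?_ hdmaxpos.le
          refine mul_le_mul_of_nonneg_left ?_
            (mul_nonneg (by norm_num) (sq_nonneg _))
          rw [hcsq]; exact husq
      _ = dmax * (4 * P ^ 2) * (Am + Ap) := by ring
  -- the exponential bound: t ≤ γ
  set C' : ℝ := 1 / Real.sqrt (dminm * (Lm.card : ℝ)) +
    1 / Real.sqrt (dminp * (Lp.card : ℝ)) with hC'def
  have hC'pos : 0 < C' := by
    rw [hC'def]
    have h1 : 0 < Real.sqrt (dminm * (Lm.card : ℝ)) :=
      Real.sqrt_pos.mpr (mul_pos hdminmpos hLmcard)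
    have h2 : 0 < Real.sqrt (dminp * (Lp.card : ℝ)) :=
      Real.sqrt_pos.mpr (mul_pos hdminppos hLpcard)
    exact add_pos (div_pos one_pos h1) (div_pos one_pos h2)
  clear_value C'
  set B₀ : ℝ := (2 * Real.sqrt dmax / γ) * C' with hB₀def
  have hB₀pos : 0 < B₀ := by
    rw [hB₀def]
    have hsd : 0 < Real.sqrt dmax := Real.sqrt_pos.mpr hdmaxpos
    exact mul_pos (div_pos (by linarith) hγ) hC'pos
  clear_value B₀
  have hlog : Real.log B₀ ≤ μ' * K := by
    have h1 : (1 / μ') * Real.log B₀ ≤ (K : ℝ) := hKbound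
    have h2 := mul_le_mul_of_nonneg_left h1 hμ'pos.le
    calc Real.log B₀ = μ' * ((1 / μ') * Real.log B₀) := by
          field_simp
      _ ≤ μ' * K := h2
  have hPexp : P ≤ B₀⁻¹ := by
    have h1 : (1 - μ') ≤ Real.exp (-μ') := by
      have := Real.add_one_le_exp (-μ')
      linarith
    have h2 : P ≤ Real.exp (-μ') ^ K := by
      rw [hPdef]; exact pow_le_pow_left₀ (by linarith) h1 K
    have h3 : Real.exp (-μ') ^ K = Real.exp (-(μ' * K)) := by
      rw [← Real.exp_nat_mul]; ring_nf
    have h4 : Real.exp (-(μ' * K)) ≤ Real.exp (-(Real.log B₀)) :=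
      Real.exp_le_exp.mpr (by linarith)
    have h5 : Real.exp (-(Real.log B₀)) = B₀⁻¹ := by
      rw [Real.exp_neg, Real.exp_log hB₀pos]
    calc P ≤ Real.exp (-μ') ^ K := h2
      _ = Real.exp (-(μ' * K)) := h3
      _ ≤ Real.exp (-(Real.log B₀)) := h4
      _ = B₀⁻¹ := h5
  set t : ℝ := 2 * Real.sqrt dmax * P * C' with htdef
  have ht : t ≤ γ := by
    have hsd : 0 < Real.sqrt dmax := Real.sqrt_pos.mpr hdmaxpos
    have h1 : t ≤ 2 * Real.sqrt dmax * B₀⁻¹ * C' := by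
      rw [htdef]
      have := mul_le_mul_of_nonneg_left hPexp (by positivity : (0:ℝ) ≤ 2 * Real.sqrt dmax)
      exact mul_le_mul_of_nonneg_right this hC'pos.le
    have h2 : 2 * Real.sqrt dmax * B₀⁻¹ * C' = γ := by
      rw [hB₀def]
      field_simp
    linarith
  have htnn : 0 ≤ t := by
    have hsd : 0 ≤ Real.sqrt dmax := Real.sqrt_nonneg _
    rw [htdef]
    exact mul_nonneg (mul_nonneg (by linarith) hPnn) hC'pos.le
  -- t² dominates the sum-of-squares bound
  have hAmF : Real.sqrt Am = 1 / Real.sqrt (dminm * (Lm.card : ℝ)) := by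
    rw [hAmdef, Real.sqrt_inv, one_div]
  have hApF : Real.sqrt Ap = 1 / Real.sqrt (dminp * (Lp.card : ℝ)) := by
    rw [hApdef, Real.sqrt_inv, one_div]
  have htsq : dmax * (4 * P ^ 2) * (Am + Ap) ≤ t ^ 2 := by
    have hsum_le : Am + Ap ≤ (Real.sqrt Am + Real.sqrt Ap) ^ 2 := by
      have h1 : Real.sqrt Am ^ 2 = Am := Real.sq_sqrt hAmpos.le
      have h2 : Real.sqrt Ap ^ 2 = Ap := Real.sq_sqrt hAppos.le
      have h3 : (Real.sqrt Am + Real.sqrt Ap) ^ 2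
          = Am + Ap + 2 * (Real.sqrt Am * Real.sqrt Ap) := by
        rw [add_sq, h1, h2]; ring
      have h4 := mul_nonneg (Real.sqrt_nonneg Am) (Real.sqrt_nonneg Ap)
      linarith
    have hC'eq : C' = Real.sqrt Am + Real.sqrt Ap := by
      rw [hC'def, hAmF, hApF]
    have ht2 : t ^ 2 = dmax * (4 * P ^ 2) * (Real.sqrt Am + Real.sqrt Ap) ^ 2 := by
      rw [htdef, hC'eq, mul_pow, mul_pow, mul_pow, Real.sq_sqrt hdmaxpos.le]
      ring
    rw [ht2]
    exact mul_le_mul_of_nonneg_left hsum_le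
      (mul_nonneg hdmaxpos.le (mul_nonneg (by norm_num) (sq_nonneg _)))
  -- conclusion
  have hfinal : ∑ j, (θ K • S.mulVec (Qᵀ.mulVec a)) j ^ 2 ≤ γ ^ 2 := by
    have h1 : t ^ 2 ≤ γ ^ 2 := pow_le_pow_left₀ htnn ht 2
    linarith
  rw [eNorm]
  calc Real.sqrt (∑ j, (θ K • S.mulVec (Qᵀ.mulVec a)) j ^ 2)
      ≤ Real.sqrt (γ ^ 2) := Real.sqrt_le_sqrt hfinal
    _ = γ := Real.sqrt_sq hγ.le
end

section
/- (PageRank distinguishability bound) Under the same graph hypotheses as Theorem 1 (symmetric nonnegative W with positive degrees, H := W·D⁻¹, normalized Laplacian L̃ with simple eigenvalue 0 and eigenvalues 0 = μ_1 < μ_2 ≤ … ≤ μ_N < 2, μ' := min{μ_2, 2−μ_N} > 0, nonempty subsets L₊, L₋ with seeds p₊ := v_{L₊}, p₋ := v_{L₋}), let 0 < α < 1 and γ > 0. If the positive integer K satisfies K ≥ (1/(μ' − log α))·log[(2(1−α)√(d_max)/γ)·(1/√(d_min₋|L₋|) + 1/√(d_min₊|L₊|))], then (1−α)·α^K·(‖H^K(p₊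 − p₋)‖ + ‖H^{K+1}(p₊ − p₋)‖) ≤ γ, where d_max := max_i d_i, d_min₊ := min_{i∈L₊} d_i, d_min₋ := min_{i∈L₋} d_i. -/
open Matrix Finset

namespace PRaux
variable {n : ℕ}

lemma eNorm_eq_norm (x : Fin n → ℝ) :
    eNorm x = ‖(WithLp.equiv 2 (Fin n → ℝ)).symm x‖ := by
  rw [EuclideanSpace.norm_eq, eNorm]
  congr 1
  refine Finset.sum_congr rfl fun i _ => ?_
  simp [Real.norm_eq_abs, sq_abs]

lemma eNorm_nonneg (x : Fin n → ℝ) : 0 ≤ eNorm x := Real.sqrt_nonneg _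

lemma eNorm_sub_le (a b : Fin n → ℝ) : eNorm (a - b) ≤ eNorm a + eNorm b := by
  rw [eNorm_eq_norm, eNorm_eq_norm, eNorm_eq_norm]
  have h : (WithLp.equiv 2 (Fin n → ℝ)).symm (a - b)
      = (WithLp.equiv 2 (Fin n → ℝ)).symm a - (WithLp.equiv 2 (Fin n → ℝ)).symm b := rfl
  rw [h]; exact norm_sub_le _ _

lemma QtQ (q : Fin n → Fin n → ℝ)
    (horth : ∀ i j, q i ⬝ᵥ q j = if i = j then 1 else 0) :
    (Matrix.of q)ᵀ * (Matrix.of q) = 1 := by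
  rw [mul_eq_one_comm]
  ext i j
  rw [Matrix.mul_apply, Matrix.one_apply]
  simpa [Matrix.of_apply, Matrix.transpose_apply, dotProduct] using horth i j

lemma parseval (q : Fin n → Fin n → ℝ)
    (horth : ∀ i j, q i ⬝ᵥ q j = if i = j then 1 else 0) (x : Fin n → ℝ) :
    ∑ i, (q i ⬝ᵥ x) ^ 2 = x ⬝ᵥ x := by
  have h := QtQ q horth
  have h2 : (Matrix.of q)ᵀ.mulVec ((Matrix.of q).mulVec x) = x := by
    rw [Matrix.mulVec_mulVec, h, Matrix.one_mulVec]
  calc ∑ i, (q i ⬝ᵥ x) ^ 2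
      = ((Matrix.of q).mulVec x) ⬝ᵥ ((Matrix.of q).mulVec x) := by
        simp [dotProduct, Matrix.mulVec, sq]
    _ = x ⬝ᵥ x := by
        have h3 : (Matrix.of q).mulVec x = Matrix.vecMul x (Matrix.of q)ᵀ := by
          rw [← Matrix.mulVec_transpose, Matrix.transpose_transpose]
        conv_lhs => rw [h3]
        rw [← Matrix.dotProduct_mulVec, ← h3, h2]

lemma decomp (q : Fin n → Fin n → ℝ)
    (horth : ∀ i j, q i ⬝ᵥ q j = if i = j then 1 else 0) (x : Fin n → ℝ) :
    ∑ i, (q i ⬝ᵥ x) • q i = x := by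
  have h := QtQ q horth
  have h2 : (Matrix.of q)ᵀ.mulVec ((Matrix.of q).mulVec x) = x := by
    rw [Matrix.mulVec_mulVec, h, Matrix.one_mulVec]
  funext j
  have := congrFun h2 j
  rw [← this]
  simp [Matrix.mulVec, dotProduct, Matrix.transpose_apply, Matrix.of_apply,
    Finset.sum_apply, mul_comm]

lemma eig_pow (A : Matrix (Fin n) (Fin n) ℝ) (hA : Aᵀ = A)
    (v : Fin n → ℝ) (ν : ℝ) (hv : A.mulVec v = ν • v) (k : ℕ) (x : Fin n → ℝ) :
    v ⬝ᵥ (A ^ k).mulVec x = ν ^ k * (v ⬝ᵥ x) := by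
  induction k with
  | zero => simp [Matrix.one_mulVec]
  | succ k ih =>
      have hvec : Matrix.vecMul v A = ν • v := by
        rw [← Matrix.mulVec_transpose, hA, hv]
      rw [pow_succ', ← Matrix.mulVec_mulVec, Matrix.dotProduct_mulVec, hvec,
        smul_dotProduct, ih, pow_succ', smul_eq_mul]
      ring

lemma eNorm_sq (x : Fin n → ℝ) : eNorm x = Real.sqrt (x ⬝ᵥ x) := by
  rw [eNorm]; congr 1; simp [dotProduct, sq]

lemma specbound (q : Fin n → Fin n → ℝ)
    (horth : ∀ i j, q i ⬝ᵥ q j = if i = j then 1 else 0)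
    (ν : Fin n → ℝ) (A : Matrix (Fin n) (Fin n) ℝ) (hA : Aᵀ = A)
    (hAq : ∀ i, A.mulVec (q i) = ν i • q i) (x : Fin n → ℝ)
    (r : ℝ) (hr : 0 ≤ r) (hb : ∀ i, |ν i| ≤ r ∨ q i ⬝ᵥ x = 0) (k : ℕ) :
    eNorm ((A ^ k).mulVec x) ≤ r ^ k * eNorm x := by
  have h1 : ((A ^ k).mulVec x) ⬝ᵥ ((A ^ k).mulVec x) ≤ (r ^ k) ^ 2 * (x ⬝ᵥ x) := by
    rw [← parseval q horth, ← parseval q horth x, Finset.mul_sum]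
    refine Finset.sum_le_sum fun i _ => ?_
    rw [eig_pow A hA (q i) (ν i) (hAq i) k x, mul_pow]
    rcases hb i with h | h
    · have h2 : |ν i ^ k| ≤ r ^ k := by
        rw [abs_pow]; exact pow_le_pow_left₀ (abs_nonneg _) h k
      have h3 : (ν i ^ k) ^ 2 ≤ (r ^ k) ^ 2 :=
        sq_le_sq' (abs_le.mp h2).1 (abs_le.mp h2).2
      exact mul_le_mul_of_nonneg_right h3 (sq_nonneg _)
    · rw [h]; simp
  rw [eNorm_sq, eNorm_sq]
  calc Real.sqrt (((A ^ k).mulVec x) ⬝ᵥ ((A ^ k).mulVec x))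
      ≤ Real.sqrt ((r ^ k) ^ 2 * (x ⬝ᵥ x)) := Real.sqrt_le_sqrt h1
    _ = r ^ k * Real.sqrt (x ⬝ᵥ x) := by
        rw [Real.sqrt_mul (sq_nonneg _), Real.sqrt_sq (pow_nonneg hr k)]

lemma diag_eNorm (g : Fin n → ℝ) (y : Fin n → ℝ) (c : ℝ) (hc : 0 ≤ c)
    (hg : ∀ i, |g i| ≤ c) :
    eNorm ((Matrix.diagonal g).mulVec y) ≤ c * eNorm y := by
  rw [eNorm, eNorm]
  have h1 : ∑ i, ((Matrix.diagonal g).mulVec y i) ^ 2 ≤ c ^ 2 * ∑ i, y i ^ 2 := by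
    rw [Finset.mul_sum]
    refine Finset.sum_le_sum fun i _ => ?_
    rw [Matrix.mulVec_diagonal, mul_pow]
    have h3 : (g i) ^ 2 ≤ c ^ 2 := sq_le_sq' (abs_le.mp (hg i)).1 (abs_le.mp (hg i)).2
    exact mul_le_mul_of_nonneg_right h3 (sq_nonneg _)
  calc Real.sqrt (∑ i, ((Matrix.diagonal g).mulVec y i) ^ 2)
      ≤ Real.sqrt (c ^ 2 * ∑ i, y i ^ 2) := Real.sqrt_le_sqrt h1
    _ = c * Real.sqrt (∑ i, y i ^ 2) := by
        rw [Real.sqrt_mul (sq_nonneg _), Real.sqrt_sq hc]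

lemma seed_bound (d : Fin n → ℝ) (hdpos : ∀ j, 0 < d j)
    (L : Finset (Fin n)) (hL : L.Nonempty) :
    eNorm (fun i => (Real.sqrt (d i))⁻¹ * (if i ∈ L then ((L.card : ℝ))⁻¹ else 0))
      ≤ 1 / Real.sqrt ((L.inf' hL d) * L.card) := by
  have hm : 0 < L.inf' hL d := (Finset.lt_inf'_iff hL).mpr fun b _ => hdpos b
  have hcard : 0 < (L.card : ℝ) := by exact_mod_cast Finset.card_pos.mpr hL
  rw [eNorm]
  have h1 : ∑ i, ((Real.sqrt (d i))⁻¹ * (if i ∈ L then ((L.card : ℝ))⁻¹ else 0)) ^ 2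
      ≤ ((L.inf' hL d) * L.card)⁻¹ := by
    have h2 : ∀ i : Fin n, ((Real.sqrt (d i))⁻¹ * (if i ∈ L then ((L.card : ℝ))⁻¹ else 0)) ^ 2
        = if i ∈ L then (d i)⁻¹ * ((L.card : ℝ)⁻¹) ^ 2 else 0 := by
      intro i
      by_cases h : i ∈ L
      · rw [if_pos h, if_pos h, mul_pow, ← Real.sqrt_inv,
          Real.sq_sqrt (inv_nonneg.mpr (hdpos i).le)]
      · rw [if_neg h, if_neg h, mul_zero]; simp
    rw [Finset.sum_congr rfl fun i _ => h2 i, Finset.sum_ite_mem, Finset.univ_inter]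
    have h3 : ∀ i ∈ L, (d i)⁻¹ * ((L.card : ℝ)⁻¹) ^ 2 ≤ (L.inf' hL d)⁻¹ * ((L.card : ℝ)⁻¹) ^ 2 := by
      intro i hi
      exact mul_le_mul_of_nonneg_right
        (inv_anti₀ hm (Finset.inf'_le d hi)) (sq_nonneg _)
    calc ∑ i ∈ L, (d i)⁻¹ * ((L.card : ℝ)⁻¹) ^ 2
        ≤ ∑ _i ∈ L, (L.inf' hL d)⁻¹ * ((L.card : ℝ)⁻¹) ^ 2 := Finset.sum_le_sum h3
      _ = L.card * ((L.inf' hL d)⁻¹ * ((L.card : ℝ)⁻¹) ^ 2) := by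
          rw [Finset.sum_const, nsmul_eq_mul]
      _ = ((L.inf' hL d) * L.card)⁻¹ := by
          field_simp
  calc Real.sqrt (∑ i, ((Real.sqrt (d i))⁻¹ * (if i ∈ L then ((L.card : ℝ))⁻¹ else 0)) ^ 2)
      ≤ Real.sqrt (((L.inf' hL d) * L.card)⁻¹) := Real.sqrt_le_sqrt h1
    _ = 1 / Real.sqrt ((L.inf' hL d) * L.card) := by
        rw [Real.sqrt_inv, one_div]

end PRaux

/-- PageRank distinguishability bound: if
K ≥ (1/(μ'−log α))·log[(2(1−α)√(d_max)/γ)·(1/√(d_min₋|L₋|) + 1/√(d_min₊|L₊|))],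
then (1−α)·α^K·(‖H^K(p₊−p₋)‖ + ‖H^{K+1}(p₊−p₋)‖) ≤ γ.
(N ≥ 2 is encoded by using matrices of size N+2.) -/
theorem pagerank_distinguishability_bound
    (N : ℕ) (W : Matrix (Fin (N + 2)) (Fin (N + 2)) ℝ)
    (hsym : W.IsSymm) (hnn : ∀ i j, 0 ≤ W i j)
    (d : Fin (N + 2) → ℝ) (hd : ∀ j, d j = ∑ i, W i j)
    (hdpos : ∀ j, 0 < d j)
    (H : Matrix (Fin (N + 2)) (Fin (N + 2)) ℝ)
    (hH : H = W * Matrix.diagonal (fun j => (d j)⁻¹))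
    (Ltil : Matrix (Fin (N + 2)) (Fin (N + 2)) ℝ)
    (hLtil : Ltil = Matrix.diagonal (fun j => (Real.sqrt (d j))⁻¹) *
      (Matrix.diagonal d - W) * Matrix.diagonal (fun j => (Real.sqrt (d j))⁻¹))
    (q : Fin (N + 2) → (Fin (N + 2) → ℝ)) (μ : Fin (N + 2) → ℝ)
    (horth : ∀ i j, q i ⬝ᵥ q j = if i = j then 1 else 0)
    (heig : ∀ i, Ltil.mulVec (q i) = μ i • q i)
    (hmono : Monotone μ) (hμ0 : μ 0 = 0) (hsimple : ∀ i, i ≠ 0 → 0 < μ i)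
    (hμlt2 : ∀ i, μ i < 2)
    (μ' : ℝ) (hμ' : μ' = min (μ 1) (2 - μ (Fin.last (N + 1))))
    (dmax : ℝ) (hdmax : dmax = Finset.univ.sup' Finset.univ_nonempty d)
    (Lp Lm : Finset (Fin (N + 2))) (hLp : Lp.Nonempty) (hLm : Lm.Nonempty)
    (pp pm : Fin (N + 2) → ℝ)
    (hpp : ∀ i, pp i = if i ∈ Lp then ((Lp.card : ℝ))⁻¹ else 0)
    (hpm : ∀ i, pm i = if i ∈ Lm then ((Lm.card : ℝ))⁻¹ else 0)
    (dminp dminm : ℝ) (hdminp : dminp = Lp.inf' hLp d) (hdminm : dminm = Lm.inf' hLm d)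
    (α : ℝ) (hα0 : 0 < α) (hα1 : α < 1)
    (γ : ℝ) (hγ : 0 < γ)
    (K : ℕ) (hK : 1 ≤ K)
    (hKbound : (K : ℝ) ≥ (1 / (μ' - Real.log α)) *
      Real.log ((2 * (1 - α) * Real.sqrt dmax / γ) *
        (1 / Real.sqrt (dminm * (Lm.card : ℝ)) + 1 / Real.sqrt (dminp * (Lp.card : ℝ))))) :
    (1 - α) * α ^ K *
      (eNorm ((H ^ K).mulVec (pp - pm)) + eNorm ((H ^ (K + 1)).mulVec (pp - pm))) ≤ γ := by
  classical
  have hspos : ∀ j, 0 < Real.sqrt (d j) := fun j => Real.sqrt_pos.mpr (hdpos j)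
  have hdmax0 : ∀ j, d j ≤ dmax := by
    intro j; rw [hdmax]; exact Finset.le_sup' d (Finset.mem_univ j)
  have hdmaxpos : 0 < dmax := lt_of_lt_of_le (hdpos 0) (hdmax0 0)
  have hone_ne : (1 : Fin (N + 2)) ≠ 0 := by
    simp [Fin.ext_iff]
  have hμ'pos : 0 < μ' := by
    rw [hμ']
    exact lt_min (hsimple 1 hone_ne) (by linarith [hμlt2 (Fin.last (N + 1))])
  have hμ'le1 : μ' ≤ 1 := by
    rw [hμ']
    have h1 : μ 1 ≤ μ (Fin.last (N + 1)) := hmono (Fin.le_last 1)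
    rcases le_or_gt (μ 1) 1 with h | h
    · exact le_trans (min_le_left _ _) h
    · exact le_trans (min_le_right _ _) (by linarith)
  have habs : ∀ i : Fin (N + 2), i ≠ 0 → |1 - μ i| ≤ 1 - μ' := by
    intro i hi
    have hv : i.val ≠ 0 := fun h => hi (Fin.ext (by simp [h]))
    have h1 : μ 1 ≤ μ i := hmono (by rw [Fin.le_def, Fin.val_one]; omega)
    have h2 : μ i ≤ μ (Fin.last (N + 1)) := hmono (Fin.le_last i)
    have hm1 : μ' ≤ μ 1 := by rw [hμ']; exact min_le_left _ _
    have hm2 : μ' ≤ 2 - μ (Fin.last (N + 1)) := by rw [hμ']; exact min_le_right _ _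
    rw [abs_le]
    constructor <;> linarith
  have hLsym : Ltilᵀ = Ltil := by
    simp [hLtil, Matrix.transpose_mul, Matrix.transpose_sub,
      Matrix.diagonal_transpose, hsym.eq, Matrix.mul_assoc]
  have hAsym : ((1 : Matrix (Fin (N+2)) (Fin (N+2)) ℝ) - Ltil)ᵀ = 1 - Ltil := by
    rw [Matrix.transpose_sub, Matrix.transpose_one, hLsym]
  have hAq : ∀ i, ((1 : Matrix (Fin (N+2)) (Fin (N+2)) ℝ) - Ltil).mulVec (q i)
      = (1 - μ i) • q i := by
    intro i
    rw [Matrix.sub_mulVec, Matrix.one_mulVec, heig, sub_smul, one_smul]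
  -- diagonal products
  have hDdinv : Matrix.diagonal d * Matrix.diagonal (fun j => (d j)⁻¹)
      = (1 : Matrix (Fin (N+2)) (Fin (N+2)) ℝ) := by
    rw [Matrix.diagonal_mul_diagonal]
    have : (fun i => d i * (d i)⁻¹) = fun _ : Fin (N+2) => (1:ℝ) :=
      funext fun i => mul_inv_cancel₀ (hdpos i).ne'
    rw [this, Matrix.diagonal_one]
  have hDsDsi : Matrix.diagonal (fun j => Real.sqrt (d j)) *
      Matrix.diagonal (fun j => (Real.sqrt (d j))⁻¹)
      = (1 : Matrix (Fin (N+2)) (Fin (N+2)) ℝ) := by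
    rw [Matrix.diagonal_mul_diagonal]
    have : (fun i => Real.sqrt (d i) * (Real.sqrt (d i))⁻¹) = fun _ : Fin (N+2) => (1:ℝ) :=
      funext fun i => mul_inv_cancel₀ (hspos i).ne'
    rw [this, Matrix.diagonal_one]
  have hDsiDs : Matrix.diagonal (fun j => (Real.sqrt (d j))⁻¹) *
      Matrix.diagonal (fun j => Real.sqrt (d j))
      = (1 : Matrix (Fin (N+2)) (Fin (N+2)) ℝ) := by
    rw [Matrix.diagonal_mul_diagonal]
    have : (fun i => (Real.sqrt (d i))⁻¹ * Real.sqrt (d i)) = fun _ : Fin (N+2) => (1:ℝ) :=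
      funext fun i => inv_mul_cancel₀ (hspos i).ne'
    rw [this, Matrix.diagonal_one]
  have hDsiDsi : Matrix.diagonal (fun j => (Real.sqrt (d j))⁻¹) *
      Matrix.diagonal (fun j => (Real.sqrt (d j))⁻¹)
      = Matrix.diagonal (fun j => (d j)⁻¹) := by
    rw [Matrix.diagonal_mul_diagonal]
    have : (fun i => (Real.sqrt (d i))⁻¹ * (Real.sqrt (d i))⁻¹)
        = fun i : Fin (N+2) => (d i)⁻¹ := by
      funext i; rw [← mul_inv, Real.mul_self_sqrt (hdpos i).le]
    rw [this]
  have hconj : H = Matrix.diagonal (fun j => Real.sqrt (d j)) *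
      ((1 : Matrix (Fin (N+2)) (Fin (N+2)) ℝ) - Ltil) *
      Matrix.diagonal (fun j => (Real.sqrt (d j))⁻¹) := by
    rw [hLtil, hH]
    rw [Matrix.mul_sub, Matrix.mul_one, Matrix.sub_mul, hDsDsi]
    simp only [← Matrix.mul_assoc]
    rw [hDsDsi, Matrix.one_mul, Matrix.mul_assoc (Matrix.diagonal d - W), hDsiDsi,
      Matrix.sub_mul, hDdinv, sub_sub_cancel]
  have hpowconj : ∀ k : ℕ, H ^ k = Matrix.diagonal (fun j => Real.sqrt (d j)) *
      ((1 : Matrix (Fin (N+2)) (Fin (N+2)) ℝ) - Ltil) ^ k *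
      Matrix.diagonal (fun j => (Real.sqrt (d j))⁻¹) := by
    intro k
    induction k with
    | zero => rw [pow_zero, pow_zero, Matrix.mul_one, hDsDsi]
    | succ k ih =>
        rw [pow_succ, pow_succ, ih, hconj]
        simp only [Matrix.mul_assoc]
        rw [← Matrix.mul_assoc (Matrix.diagonal (fun j => (Real.sqrt (d j))⁻¹))
          (Matrix.diagonal (fun j => Real.sqrt (d j))), hDsiDs, Matrix.one_mul]
  -- seed sums
  have hsum_pp : ∑ i, pp i = 1 := by
    have hc : (Lp.card : ℝ) ≠ 0 := by
      exact_mod_cast (Finset.card_pos.mpr hLp).ne'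
    calc ∑ i, pp i = ∑ i ∈ Lp, (Lp.card : ℝ)⁻¹ := by
          simp only [hpp]; rw [Finset.sum_ite_mem, Finset.univ_inter]
      _ = 1 := by rw [Finset.sum_const, nsmul_eq_mul, mul_inv_cancel₀ hc]
  have hsum_pm : ∑ i, pm i = 1 := by
    have hc : (Lm.card : ℝ) ≠ 0 := by
      exact_mod_cast (Finset.card_pos.mpr hLm).ne'
    calc ∑ i, pm i = ∑ i ∈ Lm, (Lm.card : ℝ)⁻¹ := by
          simp only [hpm]; rw [Finset.sum_ite_mem, Finset.univ_inter]
      _ = 1 := by rw [Finset.sum_const, nsmul_eq_mul, mul_inv_cancel₀ hc]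
  set x : Fin (N+2) → ℝ := fun j => (Real.sqrt (d j))⁻¹ * (pp j - pm j) with hxdef
  have hsx : (fun j => Real.sqrt (d j)) ⬝ᵥ x = 0 := by
    have h1 : ∀ j : Fin (N+2), Real.sqrt (d j) * ((Real.sqrt (d j))⁻¹ * (pp j - pm j))
        = pp j - pm j := fun j => by
      rw [← mul_assoc, mul_inv_cancel₀ (hspos j).ne', one_mul]
    calc (fun j => Real.sqrt (d j)) ⬝ᵥ x = ∑ j, (pp j - pm j) := by
          rw [dotProduct]; exact Finset.sum_congr rfl fun j _ => h1 j
      _ = 0 := by rw [Finset.sum_sub_distrib, hsum_pp, hsum_pm, sub_self]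
  have hLs : Ltil.mulVec (fun j => Real.sqrt (d j)) = 0 := by
    rw [hLtil, ← Matrix.mulVec_mulVec, ← Matrix.mulVec_mulVec]
    have h1 : (Matrix.diagonal (fun j => (Real.sqrt (d j))⁻¹)).mulVec
        (fun j => Real.sqrt (d j)) = fun _ => 1 := by
      funext j; rw [Matrix.mulVec_diagonal]; exact inv_mul_cancel₀ (hspos j).ne'
    rw [h1]
    have h2 : (Matrix.diagonal d - W).mulVec (fun _ => (1:ℝ)) = 0 := by
      funext i
      have hw : ∑ j, W i j = d i := by
        rw [hd i]
        exact Finset.sum_congr rfl fun j _ => hsym.apply j i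
      rw [Matrix.sub_mulVec]
      have hDd : (Matrix.diagonal d).mulVec (fun _ => (1:ℝ)) i = d i := by
        rw [Matrix.mulVec_diagonal, mul_one]
      have hW : W.mulVec (fun _ => (1:ℝ)) i = d i := by
        simp [Matrix.mulVec, dotProduct, hw]
      simp only [Pi.sub_apply, Pi.zero_apply, hDd, hW, sub_self]
    rw [h2, Matrix.mulVec_zero]
  have hcoef : ∀ i, i ≠ 0 → q i ⬝ᵥ (fun j => Real.sqrt (d j)) = 0 := by
    intro i hi
    have h1 : q i ⬝ᵥ Ltil.mulVec (fun j => Real.sqrt (d j)) = 0 := by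
      rw [hLs]; simp
    rw [Matrix.dotProduct_mulVec] at h1
    have h2 : Matrix.vecMul (q i) Ltil = μ i • q i := by
      rw [← Matrix.mulVec_transpose, hLsym, heig]
    rw [h2, smul_dotProduct, smul_eq_mul] at h1
    exact (mul_eq_zero.mp h1).resolve_left (hsimple i hi).ne'
  have hdec := PRaux.decomp q horth (fun j => Real.sqrt (d j))
  have hsingle : ∑ i, (q i ⬝ᵥ fun j => Real.sqrt (d j)) • q i
      = (q 0 ⬝ᵥ fun j => Real.sqrt (d j)) • q 0 :=
    Finset.sum_eq_single 0 (fun i _ hi => by rw [hcoef i hi, zero_smul])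
      (fun h => absurd (Finset.mem_univ 0) h)
  have hss : (q 0 ⬝ᵥ fun j => Real.sqrt (d j)) • q 0 = fun j => Real.sqrt (d j) :=
    hsingle ▸ hdec
  have hq0s : (q 0 ⬝ᵥ fun j => Real.sqrt (d j)) ≠ 0 := by
    intro h0
    rw [h0, zero_smul] at hss
    have h1 := congrFun hss 0
    simp only [Pi.zero_apply] at h1
    exact (hspos 0).ne' h1.symm
  have hq0x : q 0 ⬝ᵥ x = 0 := by
    have h1 : ((q 0 ⬝ᵥ fun j => Real.sqrt (d j)) • q 0) ⬝ᵥ x = 0 := by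
      rw [hss]; exact hsx
    rw [smul_dotProduct, smul_eq_mul] at h1
    exact (mul_eq_zero.mp h1).resolve_left hq0s
  have h1μnn : (0:ℝ) ≤ 1 - μ' := by linarith
  have hspec : ∀ k : ℕ, eNorm ((((1 : Matrix (Fin (N+2)) (Fin (N+2)) ℝ) - Ltil) ^ k).mulVec x)
      ≤ (1 - μ') ^ k * eNorm x := by
    intro k
    refine PRaux.specbound q horth (fun i => 1 - μ i) _ hAsym hAq x (1 - μ') h1μnn ?_ k
    intro i
    by_cases hi : i = 0
    · right; rw [hi]; exact hq0x
    · left; exact habs i hi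
  have hdiag : ∀ y : Fin (N+2) → ℝ,
      eNorm ((Matrix.diagonal (fun j => Real.sqrt (d j))).mulVec y)
        ≤ Real.sqrt dmax * eNorm y := by
    intro y
    refine PRaux.diag_eNorm _ y _ (Real.sqrt_nonneg _) fun i => ?_
    rw [abs_of_nonneg (Real.sqrt_nonneg _)]
    exact Real.sqrt_le_sqrt (hdmax0 i)
  have hHbound : ∀ k : ℕ, eNorm ((H ^ k).mulVec (pp - pm))
      ≤ Real.sqrt dmax * ((1 - μ') ^ k * eNorm x) := by
    intro k
    have hx2 : (Matrix.diagonal (fun j => (Real.sqrt (d j))⁻¹)).mulVec (pp - pm) = x := by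
      funext j; rw [Matrix.mulVec_diagonal]; rfl
    have e1 : (H ^ k).mulVec (pp - pm)
        = (Matrix.diagonal (fun j => Real.sqrt (d j))).mulVec
          ((((1 : Matrix (Fin (N+2)) (Fin (N+2)) ℝ) - Ltil) ^ k).mulVec x) := by
      rw [hpowconj k, ← Matrix.mulVec_mulVec, ← Matrix.mulVec_mulVec, hx2]
    rw [e1]
    exact le_trans (hdiag _) (mul_le_mul_of_nonneg_left (hspec k) (Real.sqrt_nonneg _))
  -- bound on eNorm x
  set B : ℝ := 1 / Real.sqrt (dminm * (Lm.card : ℝ)) + 1 / Real.sqrt (dminp * (Lp.card : ℝ))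
    with hBdef
  have hdminp_pos : 0 < dminp := by
    rw [hdminp]; exact (Finset.lt_inf'_iff hLp).mpr fun b _ => hdpos b
  have hdminm_pos : 0 < dminm := by
    rw [hdminm]; exact (Finset.lt_inf'_iff hLm).mpr fun b _ => hdpos b
  have hcardp : 0 < (Lp.card : ℝ) := by exact_mod_cast Finset.card_pos.mpr hLp
  have hcardm : 0 < (Lm.card : ℝ) := by exact_mod_cast Finset.card_pos.mpr hLm
  have hBpos : 0 < B := by
    rw [hBdef]
    have h1 : 0 < Real.sqrt (dminm * (Lm.card : ℝ)) :=
      Real.sqrt_pos.mpr (mul_pos hdminm_pos hcardm)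
    have h2 : 0 < Real.sqrt (dminp * (Lp.card : ℝ)) :=
      Real.sqrt_pos.mpr (mul_pos hdminp_pos hcardp)
    exact add_pos (one_div_pos.mpr h1) (one_div_pos.mpr h2)
  have hxB : eNorm x ≤ B := by
    have hxsub : x = (fun i => (Real.sqrt (d i))⁻¹ * (if i ∈ Lp then ((Lp.card : ℝ))⁻¹ else 0))
        - (fun i => (Real.sqrt (d i))⁻¹ * (if i ∈ Lm then ((Lm.card : ℝ))⁻¹ else 0)) := by
      funext i
      rw [hxdef]
      simp only [Pi.sub_apply, hpp i, hpm i]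
      ring
    rw [hxsub, hBdef]
    refine le_trans (PRaux.eNorm_sub_le _ _) ?_
    have b1 := PRaux.seed_bound d hdpos Lp hLp
    have b2 := PRaux.seed_bound d hdpos Lm hLm
    rw [← hdminp] at b1
    rw [← hdminm] at b2
    calc eNorm _ + eNorm _ ≤ 1 / Real.sqrt (dminp * (Lp.card : ℝ))
          + 1 / Real.sqrt (dminm * (Lm.card : ℝ)) := add_le_add b1 b2
      _ = _ := add_comm _ _
  have hExnn : 0 ≤ eNorm x := PRaux.eNorm_nonneg x
  -- main inequality chain
  have main1 : (1 - α) * α ^ K *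
      (eNorm ((H ^ K).mulVec (pp - pm)) + eNorm ((H ^ (K + 1)).mulVec (pp - pm)))
      ≤ 2 * (1 - α) * Real.sqrt dmax * B * (α * (1 - μ')) ^ K := by
    have hpos1 : (0:ℝ) ≤ (1 - α) * α ^ K :=
      mul_nonneg (by linarith) (pow_nonneg hα0.le K)
    have c3 : (1 - μ') ^ (K + 1) ≤ (1 - μ') ^ K :=
      pow_le_pow_of_le_one h1μnn (by linarith) (Nat.le_succ K)
    have b1 : eNorm ((H ^ K).mulVec (pp - pm)) ≤ Real.sqrt dmax * ((1 - μ') ^ K * B) :=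
      le_trans (hHbound K) (mul_le_mul_of_nonneg_left
        (mul_le_mul_of_nonneg_left hxB (pow_nonneg h1μnn K)) (Real.sqrt_nonneg _))
    have b2 : eNorm ((H ^ (K + 1)).mulVec (pp - pm)) ≤ Real.sqrt dmax * ((1 - μ') ^ K * B) :=
      le_trans (hHbound (K + 1)) (mul_le_mul_of_nonneg_left
        (mul_le_mul c3 hxB hExnn (pow_nonneg h1μnn K)) (Real.sqrt_nonneg _))
    have step : eNorm ((H ^ K).mulVec (pp - pm)) + eNorm ((H ^ (K + 1)).mulVec (pp - pm))
        ≤ 2 * (Real.sqrt dmax * ((1 - μ') ^ K * B)) := by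
      calc _ ≤ Real.sqrt dmax * ((1 - μ') ^ K * B) + Real.sqrt dmax * ((1 - μ') ^ K * B) :=
            add_le_add b1 b2
        _ = _ := (two_mul _).symm
    calc (1 - α) * α ^ K * _ ≤ (1 - α) * α ^ K * (2 * (Real.sqrt dmax * ((1 - μ') ^ K * B))) :=
          mul_le_mul_of_nonneg_left step hpos1
      _ = 2 * (1 - α) * Real.sqrt dmax * B * (α * (1 - μ')) ^ K := by
          rw [mul_pow]; try ring
  have hc : 0 < μ' - Real.log α := by
    have : Real.log α < 0 := Real.log_neg hα0 hα1
    linarith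
  have hexp : (α * (1 - μ')) ^ K ≤ Real.exp (-((K:ℝ) * (μ' - Real.log α))) := by
    have hb : 1 - μ' ≤ Real.exp (-μ') := by
      have := Real.add_one_le_exp (-μ'); linarith
    have h1 : α * (1 - μ') ≤ Real.exp (Real.log α - μ') := by
      calc α * (1 - μ') ≤ α * Real.exp (-μ') := mul_le_mul_of_nonneg_left hb hα0.le
        _ = Real.exp (Real.log α) * Real.exp (-μ') := by rw [Real.exp_log hα0]
        _ = Real.exp (Real.log α - μ') := by rw [← Real.exp_add]; ring_nf
    calc (α * (1 - μ')) ^ K ≤ (Real.exp (Real.log α - μ')) ^ K :=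
          pow_le_pow_left₀ (mul_nonneg hα0.le h1μnn) h1 K
      _ = Real.exp (-((K:ℝ) * (μ' - Real.log α))) := by
          rw [← Real.exp_nat_mul]; congr 1; ring
  set R : ℝ := 2 * (1 - α) * Real.sqrt dmax / γ * B with hRdef
  have hsq : 0 < Real.sqrt dmax := Real.sqrt_pos.mpr hdmaxpos
  have h1a : (0:ℝ) < 1 - α := by linarith
  have hR : 0 < R := by
    rw [hRdef]
    exact mul_pos (div_pos (by positivity) hγ) hBpos
  have hlogR : Real.log R ≤ (K:ℝ) * (μ' - Real.log α) := by
    have hKb : Real.log R / (μ' - Real.log α) ≤ (K:ℝ) := by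
      have := hKbound
      rw [ge_iff_le, one_div, inv_mul_eq_div] at this
      exact this
    exact (div_le_iff₀ hc).mp hKb
  have hfinal : 2 * (1 - α) * Real.sqrt dmax * B * (α * (1 - μ')) ^ K ≤ γ := by
    have h2 : (α * (1 - μ')) ^ K ≤ R⁻¹ := by
      refine le_trans hexp ?_
      have h3 : Real.exp (-((K:ℝ) * (μ' - Real.log α))) ≤ Real.exp (Real.log R⁻¹) := by
        apply Real.exp_le_exp.mpr
        rw [Real.log_inv]
        linarith
      rwa [Real.exp_log (inv_pos.mpr hR)] at h3
    have hRγ : 2 * (1 - α) * Real.sqrt dmax * B = γ * R := by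
      rw [hRdef]; field_simp
    have hnn : (0:ℝ) ≤ 2 * (1 - α) * Real.sqrt dmax * B := mul_nonneg (mul_nonneg (mul_nonneg (by norm_num) h1a.le) hsq.le) hBpos.le
    calc 2 * (1 - α) * Real.sqrt dmax * B * (α * (1 - μ')) ^ K
        ≤ 2 * (1 - α) * Real.sqrt dmax * B * R⁻¹ := mul_le_mul_of_nonneg_left h2 hnn
      _ = γ * (R * R⁻¹) := by rw [hRγ]; ring
      _ = γ := by rw [mul_inv_cancel₀ hR.ne', mul_one]
  exact le_trans main1 hfinal
end

section
/- Let W be a symmetric N×N real matrix with nonnegative entries, positive degrees d_j := Σ_i W_{ij}, D := diag(d_1,…,d_N), H := W·D⁻¹, vol := Σ_j d_j, and L̃ := D^{-1/2}(D−W)D^{-1/2}. Suppose L̃ has an orthonormal eigenbasis with eigenvalues 0 = μ_1 < μ_2 ≤ … ≤ μ_N (eigenvalue 0 simple), and set μ' := min{μ_2, 2−μ_N}. Then for every nonempty subset S ⊆ {1,…,N} and every positive integer K, ‖H^K·v_S − d/vol‖ ≤ √(d_max/(d_min(S)·|S|))·e^{−K·μ'}, where d ∈ ℝ^N is the degree vector,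 d_max := max_i d_i, and d_min(S) := min_{i∈S} d_i. -/
open Matrix Finset

set_option maxHeartbeats 1000000

/-- for every nonempty seed set S and every K ≥ 1,
‖H^K v_S − d/vol‖ ≤ √(d_max/(d_min(S)·|S|))·e^{−Kμ'}.
(N ≥ 2 is encoded by using matrices of size N+2.) -/
theorem seed_diffusion_stationary_convergence_bound
    (N : ℕ) (W : Matrix (Fin (N + 2)) (Fin (N + 2)) ℝ)
    (hsym : W.IsSymm) (hnn : ∀ i j, 0 ≤ W i j)
    (d : Fin (N + 2) → ℝ) (hd : ∀ j, d j = ∑ i, W i j)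
    (hdpos : ∀ j, 0 < d j)
    (H : Matrix (Fin (N + 2)) (Fin (N + 2)) ℝ)
    (hH : H = W * Matrix.diagonal (fun j => (d j)⁻¹))
    (vol : ℝ) (hvol : vol = ∑ j, d j)
    (Ltil : Matrix (Fin (N + 2)) (Fin (N + 2)) ℝ)
    (hLtil : Ltil = Matrix.diagonal (fun j => (Real.sqrt (d j))⁻¹) *
      (Matrix.diagonal d - W) * Matrix.diagonal (fun j => (Real.sqrt (d j))⁻¹))
    (q : Fin (N + 2) → (Fin (N + 2) → ℝ)) (μ : Fin (N + 2) → ℝ)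
    (horth : ∀ i j, q i ⬝ᵥ q j = if i = j then 1 else 0)
    (heig : ∀ i, Ltil.mulVec (q i) = μ i • q i)
    (hmono : Monotone μ) (hμ0 : μ 0 = 0) (hsimple : ∀ i, i ≠ 0 → 0 < μ i)
    (μ' : ℝ) (hμ' : μ' = min (μ 1) (2 - μ (Fin.last (N + 1))))
    (dmax : ℝ) (hdmax : dmax = Finset.univ.sup' Finset.univ_nonempty d)
    (S : Finset (Fin (N + 2))) (hS : S.Nonempty)
    (vS : Fin (N + 2) → ℝ)
    (hvS : ∀ i, vS i = if i ∈ S then ((S.card : ℝ))⁻¹ else 0)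
    (dminS : ℝ) (hdminS : dminS = S.inf' hS d)
    (K : ℕ) (hK : 1 ≤ K) :
    eNorm ((H ^ K).mulVec vS - fun i => d i / vol) ≤
      Real.sqrt (dmax / (dminS * (S.card : ℝ))) * Real.exp (-(K : ℝ) * μ') := by
  classical
  -- square roots of degrees
  set s : Fin (N+2) → ℝ := fun j => Real.sqrt (d j) with hs
  have hspos : ∀ j, 0 < s j := fun j => Real.sqrt_pos.2 (hdpos j)
  have hsne : ∀ j, s j ≠ 0 := fun j => (hspos j).ne'
  have hssq : ∀ j, s j * s j = d j := fun j => Real.mul_self_sqrt (hdpos j).le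
  set Dh : Matrix (Fin (N+2)) (Fin (N+2)) ℝ := Matrix.diagonal s with hDh
  set Dhi : Matrix (Fin (N+2)) (Fin (N+2)) ℝ := Matrix.diagonal (fun j => (s j)⁻¹) with hDhi
  set M : Matrix (Fin (N+2)) (Fin (N+2)) ℝ := Dhi * W * Dhi with hMdef
  have hDhDhi : Dh * Dhi = 1 := by
    rw [hDh, hDhi, Matrix.diagonal_mul_diagonal]
    rw [show (fun i => s i * (s i)⁻¹) = fun _ : Fin (N+2) => (1:ℝ) by
      funext i; exact mul_inv_cancel₀ (hsne i)]
    exact Matrix.diagonal_one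
  -- L = 1 - M
  have hLM : Ltil = 1 - M := by
    rw [hLtil, hMdef, hDhi, hs]
    rw [Matrix.mul_sub, Matrix.sub_mul, Matrix.diagonal_mul_diagonal]
    congr 1
    rw [Matrix.diagonal_mul_diagonal]
    rw [show (fun i => (Real.sqrt (d i))⁻¹ * d i * (Real.sqrt (d i))⁻¹) = fun _ : Fin (N+2) => (1:ℝ) by
      funext i
      rw [← hssq i]
      field_simp
      rw [Real.sqrt_sq (hspos i).le]; exact div_self (pow_ne_zero 2 (hsne i))]
    exact Matrix.diagonal_one
  have hMq : ∀ i, M.mulVec (q i) = (1 - μ i) • q i := by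
    intro i
    have : M = 1 - Ltil := by rw [hLM, sub_sub_cancel]
    rw [this, Matrix.sub_mulVec, Matrix.one_mulVec, heig i, sub_smul, one_smul]
  have hMpow : ∀ (k : ℕ) i, (M ^ k).mulVec (q i) = ((1 - μ i) ^ k) • q i := by
    intro k i
    induction k with
    | zero => simp
    | succ k ih =>
      rw [pow_succ', ← Matrix.mulVec_mulVec, ih, Matrix.mulVec_smul, hMq, smul_smul,
        pow_succ, mul_comm]
  -- completeness of the orthonormal system
  set Q : Matrix (Fin (N+2)) (Fin (N+2)) ℝ := Matrix.of q with hQ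
  have hQQt : Q * Qᵀ = 1 := by
    ext i j
    rw [Matrix.mul_apply, Matrix.one_apply, ← horth i j]
    simp [hQ, dotProduct]
  have hQtQ : Qᵀ * Q = 1 := mul_eq_one_comm.mp hQQt
  have hcomp : ∀ x : Fin (N+2) → ℝ, ∀ j, ∑ i, (q i ⬝ᵥ x) * q i j = x j := by
    intro x j
    have h1 : (Qᵀ * Q).mulVec x = x := by rw [hQtQ, Matrix.one_mulVec]
    have h2 := congrFun h1 j
    rw [← Matrix.mulVec_mulVec] at h2
    simpa [Matrix.mulVec, dotProduct, hQ, mul_comm,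
      Finset.mul_sum, Finset.sum_mul] using h2
  have hpars : ∀ x : Fin (N+2) → ℝ, ∑ i, (q i ⬝ᵥ x) ^ 2 = x ⬝ᵥ x := by
    intro x
    have h1 : x ⬝ᵥ x = ∑ j, (∑ i, (q i ⬝ᵥ x) * q i j) * x j :=
      Finset.sum_congr rfl fun j _ => by rw [hcomp x j]
    have h2 : ∑ j, (∑ i, (q i ⬝ᵥ x) * q i j) * x j
        = ∑ j, ∑ i, (q i ⬝ᵥ x) * (q i j * x j) :=
      Finset.sum_congr rfl fun j _ => by
        rw [Finset.sum_mul]; exact Finset.sum_congr rfl fun i _ => by ring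
    rw [h1, h2, Finset.sum_comm]
    apply Finset.sum_congr rfl
    intro i _
    rw [← Finset.mul_sum, sq]
    rfl
  -- norm of a combination
  have hkey : ∀ a : Fin (N+2) → ℝ,
      ∑ j, (∑ i, a i * q i j) ^ 2 = ∑ i, a i ^ 2 := by
    intro a
    have h1 : ∀ j, (∑ i, a i * q i j) ^ 2 = ∑ i, ∑ k, (a i * a k) * (q i j * q k j) := by
      intro j
      rw [sq, Finset.sum_mul_sum]
      exact Finset.sum_congr rfl fun i _ => Finset.sum_congr rfl fun k _ => by ring
    rw [Finset.sum_congr rfl fun j _ => h1 j, Finset.sum_comm]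
    apply Finset.sum_congr rfl
    intro i _
    rw [Finset.sum_comm]
    have h2 : ∀ k, ∑ j, (a i * a k) * (q i j * q k j) = (a i * a k) * (q i ⬝ᵥ q k) := by
      intro k
      rw [dotProduct, Finset.mul_sum]
    rw [Finset.sum_congr rfl fun k _ => h2 k]
    have h3 : ∀ k, (a i * a k) * (q i ⬝ᵥ q k) = if i = k then a i ^ 2 else 0 := by
      intro k
      rw [horth i k]
      by_cases h : i = k
      · subst h; simp [sq]
      · simp [h]
    rw [Finset.sum_congr rfl fun k _ => h3 k]
    simp
  -- the vector x and its coefficients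
  set x : Fin (N+2) → ℝ := fun j => vS j * (s j)⁻¹ with hx
  set c : Fin (N+2) → ℝ := fun i => q i ⬝ᵥ x with hc
  have hMKx : ∀ j, (M ^ K).mulVec x j = ∑ i, ((1 - μ i) ^ K * c i) * q i j := by
    intro j
    have hxsum : x = ∑ i, c i • q i := by
      funext j'
      rw [Finset.sum_apply]
      simp only [Pi.smul_apply, smul_eq_mul]
      exact (hcomp x j').symm
    have hlin : (M ^ K).mulVec (∑ i, c i • q i) = ∑ i, c i • (M ^ K).mulVec (q i) := by
      rw [← Matrix.mulVecLin_apply, map_sum]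
      simp [Matrix.mulVecLin_apply]
    rw [hxsum, hlin]
    rw [Finset.sum_apply]
    apply Finset.sum_congr rfl
    intro i _
    rw [hMpow K i]
    simp only [Pi.smul_apply, smul_eq_mul]
    ring
  -- L s = 0
  have hones : Dhi.mulVec s = fun _ => 1 := by
    funext j
    rw [hDhi, Matrix.mulVec_diagonal]
    exact inv_mul_cancel₀ (hsne j)
  have hWrow : ∀ j, ∑ k, W j k = d j := by
    intro j
    rw [hd j]
    exact Finset.sum_congr rfl fun k _ => (hsym.apply j k).symm
  have hLe : Ltil.mulVec s = 0 := by
    have hL2 : Ltil = Dhi * (Matrix.diagonal d - W) * Dhi := by rw [hLtil, hDhi, hs]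
    rw [hL2, ← Matrix.mulVec_mulVec, ← Matrix.mulVec_mulVec, hones]
    have : (Matrix.diagonal d - W).mulVec (fun _ => 1) = 0 := by
      funext j
      rw [Matrix.sub_mulVec]
      simp [Matrix.mulVec, dotProduct, Matrix.diagonal_apply, hWrow j,
        Finset.sum_ite_eq]
    rw [this, Matrix.mulVec_zero]
  have hLsym : Ltilᵀ = Ltil := by
    rw [hLtil, Matrix.transpose_mul, Matrix.transpose_mul, Matrix.diagonal_transpose,
      Matrix.transpose_sub, Matrix.diagonal_transpose, hsym.eq, Matrix.mul_assoc]
  have hqis : ∀ i, i ≠ 0 → q i ⬝ᵥ s = 0 := by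
    intro i hi
    have h1 : q i ⬝ᵥ Ltil.mulVec s = (Ltil.mulVec (q i)) ⬝ᵥ s := by
      rw [dotProduct_mulVec, ← Matrix.mulVec_transpose, hLsym]
    rw [hLe, dotProduct_zero, heig i, smul_dotProduct] at h1
    have := hsimple i hi
    rw [smul_eq_mul, eq_comm, mul_eq_zero] at h1
    rcases h1 with h | h
    · exact absurd h this.ne'
    · exact h
  -- s expansion
  set c0 : ℝ := q 0 ⬝ᵥ s with hc0
  have hsexp : ∀ j, s j = c0 * q 0 j := by
    intro j
    rw [← hcomp s j]
    rw [Finset.sum_eq_single 0 (fun i _ hi => by rw [hqis i hi]; ring)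
      (fun h => absurd (Finset.mem_univ 0) h)]
  have hssvol : s ⬝ᵥ s = vol := by
    rw [hvol, dotProduct]
    exact Finset.sum_congr rfl fun j _ => hssq j
  have hvolpos : 0 < vol := by
    rw [hvol]
    exact Finset.sum_pos (fun j _ => hdpos j) Finset.univ_nonempty
  have hc0sq : c0 * c0 = vol := by
    have : s ⬝ᵥ s = c0 * c0 := by
      rw [dotProduct]
      have : ∀ j, s j * s j = (c0 * c0) * (q 0 j * q 0 j) := by
        intro j; rw [hsexp j]; ring
      rw [Finset.sum_congr rfl fun j _ => this j, ← Finset.mul_sum]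
      rw [show ∑ j, q 0 j * q 0 j = q 0 ⬝ᵥ q 0 from rfl, horth 0 0]
      simp
    rw [← this, hssvol]
  have hc0ne : c0 ≠ 0 := by
    intro h
    rw [h, mul_zero] at hc0sq
    exact hvolpos.ne hc0sq
  -- c 0
  have hsx : s ⬝ᵥ x = 1 := by
    rw [dotProduct, hx]
    have h1 : ∀ j, s j * (vS j * (s j)⁻¹) = vS j := by
      intro j
      rw [mul_comm (vS j) ((s j)⁻¹), ← mul_assoc, mul_inv_cancel₀ (hsne j), one_mul]
    rw [Finset.sum_congr rfl fun j _ => h1 j]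
    have hcard : 0 < S.card := Finset.card_pos.mpr hS
    rw [Finset.sum_congr rfl fun j _ => hvS j]
    rw [Finset.sum_ite_mem, Finset.univ_inter, Finset.sum_const, nsmul_eq_mul]
    rw [mul_inv_cancel₀ (by exact_mod_cast hcard.ne')]
  have hc0x : ∀ j, c 0 * q 0 j = vol⁻¹ * s j := by
    intro j
    have hq0 : c 0 = c0⁻¹ * (s ⬝ᵥ x) := by
      show q 0 ⬝ᵥ x = c0⁻¹ * (s ⬝ᵥ x)
      rw [dotProduct, dotProduct, Finset.mul_sum]
      apply Finset.sum_congr rfl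
      intro k _
      rw [hsexp k]
      field_simp
    rw [hq0, hsx, hsexp j, ← hc0sq]
    field_simp
  -- the residual vector y
  set a : Fin (N+2) → ℝ := fun i => if i = 0 then 0 else (1 - μ i) ^ K * c i with ha
  set y : Fin (N+2) → ℝ := fun j => ∑ i, a i * q i j with hy
  have hyres : ∀ j, (M ^ K).mulVec x j - vol⁻¹ * s j = y j := by
    intro j
    have hyj : y j = ∑ i, a i * q i j := rfl
    rw [hyj, hMKx j, ← hc0x j]
    have h0 : (1 - μ 0) ^ K * c 0 = c 0 := by rw [hμ0]; simp
    have hterm : ∀ i : Fin (N+2), a i * q i j = ((1 - μ i) ^ K * c i) * q i j -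
        (if i = 0 then c 0 * q 0 j else 0) := by
      intro i
      by_cases h : i = 0
      · subst h
        simp [ha, hμ0]
      · simp only [ha, if_neg h]
        ring
    rw [Finset.sum_congr rfl fun i _ => hterm i, Finset.sum_sub_distrib]
    congr 1
    simp
  -- spectral bound
  have hμ'le : μ' ≤ μ 1 := hμ' ▸ min_le_left _ _
  have hμ'le2 : μ (Fin.last (N+1)) ≤ 2 - μ' := by
    have := hμ' ▸ min_le_right (μ 1) (2 - μ (Fin.last (N + 1)))
    linarith
  have h1μ' : 0 ≤ 1 - μ' := by
    have h1 : μ 1 ≤ μ (Fin.last (N+1)) := hmono (Fin.le_last 1)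
    linarith
  have hμb : ∀ i, i ≠ 0 → (1 - μ i) ^ 2 ≤ (1 - μ') ^ 2 := by
    intro i hi
    have hi1 : (1 : Fin (N+2)) ≤ i := by
      rw [Fin.le_def]
      have : i.val ≠ 0 := fun hh => hi (Fin.ext hh)
      simpa [Fin.val_one] using Nat.one_le_iff_ne_zero.mpr this
    have h1 : μ 1 ≤ μ i := hmono hi1
    have h2 : μ i ≤ μ (Fin.last (N+1)) := hmono (Fin.le_last i)
    apply sq_le_sq' <;> linarith
  have hab : ∀ i, a i ^ 2 ≤ ((1 - μ') ^ 2) ^ K * c i ^ 2 := by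
    intro i
    by_cases h : i = 0
    · subst h
      have h0 : a 0 = 0 := by simp [ha]
      rw [h0]
      have h00 : (0:ℝ) ^ 2 = 0 := by norm_num
      rw [h00]
      positivity
    · have h1 : a i = (1 - μ i) ^ K * c i := by simp [ha, h]
      rw [h1, mul_pow, ← pow_mul, mul_comm K 2, pow_mul]
      have h2 : ((1 - μ i) ^ 2) ^ K ≤ ((1 - μ') ^ 2) ^ K :=
        pow_le_pow_left₀ (sq_nonneg _) (hμb i h) K
      exact mul_le_mul_of_nonneg_right h2 (sq_nonneg _)
  -- x norm bound
  have hcardpos : (0:ℝ) < S.card := by exact_mod_cast Finset.card_pos.mpr hS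
  have hdminSpos : 0 < dminS := by
    rw [hdminS]
    obtain ⟨j, hj, hjeq⟩ := Finset.exists_mem_eq_inf' hS d
    rw [hjeq]; exact hdpos j
  have hxx : x ⬝ᵥ x ≤ (dminS * S.card)⁻¹ := by
    rw [dotProduct]
    have h1 : ∀ j, x j * x j = if j ∈ S then ((S.card:ℝ))⁻¹^2 * (d j)⁻¹ else 0 := by
      intro j
      have hxj : x j = vS j * (s j)⁻¹ := rfl
      rw [hxj, hvS j]
      by_cases h : j ∈ S
      · simp only [if_pos h]
        rw [← hssq j, mul_inv]
        ring
      · simp [h]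
    rw [Finset.sum_congr rfl fun j _ => h1 j, Finset.sum_ite_mem, Finset.univ_inter]
    have h2 : ∀ j ∈ S, ((S.card:ℝ))⁻¹^2 * (d j)⁻¹ ≤ ((S.card:ℝ))⁻¹^2 * dminS⁻¹ := by
      intro j hj
      have : dminS ≤ d j := hdminS ▸ Finset.inf'_le d hj
      have h3 : (d j)⁻¹ ≤ dminS⁻¹ := inv_anti₀ hdminSpos this
      have : (0:ℝ) ≤ ((S.card:ℝ))⁻¹^2 := sq_nonneg _
      exact mul_le_mul_of_nonneg_left h3 this
    calc ∑ j ∈ S, ((S.card:ℝ))⁻¹^2 * (d j)⁻¹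
        ≤ ∑ j ∈ S, ((S.card:ℝ))⁻¹^2 * dminS⁻¹ := Finset.sum_le_sum h2
      _ = S.card * (((S.card:ℝ))⁻¹^2 * dminS⁻¹) := by
          rw [Finset.sum_const, nsmul_eq_mul]
      _ = (dminS * S.card)⁻¹ := by
          rw [sq, ← mul_assoc, ← mul_assoc, mul_inv_cancel₀ hcardpos.ne', one_mul, mul_inv]
          ring
  -- y norm bound
  have hyy : ∑ j, y j ^ 2 ≤ ((1 - μ') ^ 2) ^ K * (dminS * S.card)⁻¹ := by
    rw [hy]
    rw [hkey a]
    calc ∑ i, a i ^ 2 ≤ ∑ i, ((1 - μ') ^ 2) ^ K * c i ^ 2 :=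
          Finset.sum_le_sum fun i _ => hab i
      _ = ((1 - μ') ^ 2) ^ K * ∑ i, c i ^ 2 := by rw [Finset.mul_sum]
      _ = ((1 - μ') ^ 2) ^ K * (x ⬝ᵥ x) := by rw [hc]; rw [hpars x]
      _ ≤ ((1 - μ') ^ 2) ^ K * (dminS * S.card)⁻¹ := by
          apply mul_le_mul_of_nonneg_left hxx
          positivity
  -- conjugation: H^K vS - d/vol = Dh y
  have hHDh : H * Dh = Dh * M := by
    have h1 : Matrix.diagonal (fun j => (d j)⁻¹) * Dh = Dhi := by
      rw [hDh, hDhi, Matrix.diagonal_mul_diagonal]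
      rw [show (fun i => (d i)⁻¹ * s i) = fun j : Fin (N+2) => (s j)⁻¹ from
        funext fun j => by
          rw [← hssq j, mul_inv, mul_assoc, inv_mul_cancel₀ (hsne j), mul_one]]
    calc H * Dh = W * (Matrix.diagonal (fun j => (d j)⁻¹) * Dh) := by
          rw [hH, Matrix.mul_assoc]
      _ = W * Dhi := by rw [h1]
      _ = Dh * M := by
          rw [hMdef, ← Matrix.mul_assoc, ← Matrix.mul_assoc, hDhDhi, Matrix.one_mul]
  have hHKDh : ∀ k : ℕ, H ^ k * Dh = Dh * M ^ k := by
    intro k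
    induction k with
    | zero => simp
    | succ k ih =>
      rw [pow_succ, pow_succ, Matrix.mul_assoc, hHDh, ← Matrix.mul_assoc, ih,
        Matrix.mul_assoc]
  have hvSx : Dh.mulVec x = vS := by
    funext j
    rw [hDh, Matrix.mulVec_diagonal]
    show s j * (vS j * (s j)⁻¹) = vS j
    rw [mul_comm (vS j) ((s j)⁻¹), ← mul_assoc, mul_inv_cancel₀ (hsne j), one_mul]
  have hfinal : ∀ j, (H ^ K).mulVec vS j - d j / vol = s j * y j := by
    intro j
    have h1 : (H ^ K).mulVec vS = Dh.mulVec ((M ^ K).mulVec x) := by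
      rw [← hvSx, Matrix.mulVec_mulVec, Matrix.mulVec_mulVec, hHKDh K]
    rw [h1, hDh, Matrix.mulVec_diagonal, ← hyres j]
    rw [mul_sub]
    congr 1
    rw [← hssq j]
    ring
  -- putting it together
  have hdmaxpos : 0 < dmax := by
    rw [hdmax]
    obtain ⟨j, hj, hjeq⟩ := Finset.exists_mem_eq_sup' Finset.univ_nonempty d
    rw [hjeq]; exact hdpos j
  have hsum : ∑ j, ((H ^ K).mulVec vS - fun i => d i / vol) j ^ 2 ≤
      dmax * (((1 - μ') ^ 2) ^ K * (dminS * S.card)⁻¹) := by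
    have h1 : ∀ j, ((H ^ K).mulVec vS - fun i => d i / vol) j ^ 2 = d j * y j ^ 2 := by
      intro j
      have : ((H ^ K).mulVec vS - fun i => d i / vol) j = s j * y j := by
        simp only [Pi.sub_apply]
        exact hfinal j
      rw [this, mul_pow, sq (s j), hssq j]
    rw [Finset.sum_congr rfl fun j _ => h1 j]
    calc ∑ j, d j * y j ^ 2 ≤ ∑ j, dmax * y j ^ 2 := by
          apply Finset.sum_le_sum
          intro j _
          have : d j ≤ dmax := hdmax ▸ Finset.le_sup' d (Finset.mem_univ j)
          exact mul_le_mul_of_nonneg_right this (sq_nonneg _)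
      _ = dmax * ∑ j, y j ^ 2 := by rw [Finset.mul_sum]
      _ ≤ dmax * (((1 - μ') ^ 2) ^ K * (dminS * S.card)⁻¹) :=
          mul_le_mul_of_nonneg_left hyy hdmaxpos.le
  -- exponential bound
  have hexp : ((1 - μ') ^ 2) ^ K ≤ (Real.exp (-(K : ℝ) * μ')) ^ 2 := by
    have h1 : (1 - μ') ≤ Real.exp (-μ') := by
      have := Real.add_one_le_exp (-μ')
      linarith
    have h2 : (1 - μ') ^ K ≤ Real.exp (-μ') ^ K := pow_le_pow_left₀ h1μ' h1 K
    have h3 : Real.exp (-μ') ^ K = Real.exp (-(K:ℝ) * μ') := by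
      rw [← Real.exp_nat_mul]
      congr 1
      ring
    calc ((1 - μ') ^ 2) ^ K = ((1 - μ') ^ K) ^ 2 := by
          rw [← pow_mul, ← pow_mul, mul_comm]
      _ ≤ (Real.exp (-μ') ^ K) ^ 2 :=
          pow_le_pow_left₀ (pow_nonneg h1μ' K) h2 2
      _ = (Real.exp (-(K:ℝ) * μ')) ^ 2 := by rw [h3]
  -- conclusion
  have hRHS : 0 ≤ Real.sqrt (dmax / (dminS * (S.card:ℝ))) * Real.exp (-(K:ℝ)*μ') := by
    exact mul_nonneg (Real.sqrt_nonneg _) (Real.exp_pos _).le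
  have hchain : ∑ j, ((H ^ K).mulVec vS - fun i => d i / vol) j ^ 2 ≤
      (Real.sqrt (dmax / (dminS * (S.card:ℝ))) * Real.exp (-(K:ℝ)*μ')) ^ 2 := by
    have hs2 : (Real.sqrt (dmax / (dminS * (S.card:ℝ)))) ^ 2 = dmax / (dminS * (S.card:ℝ)) :=
      Real.sq_sqrt (div_nonneg hdmaxpos.le (mul_pos hdminSpos hcardpos).le)
    calc ∑ j, ((H ^ K).mulVec vS - fun i => d i / vol) j ^ 2
        ≤ dmax * (((1 - μ') ^ 2) ^ K * (dminS * (S.card:ℝ))⁻¹) := hsum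
      _ ≤ dmax * ((Real.exp (-(K:ℝ)*μ')) ^ 2 * (dminS * (S.card:ℝ))⁻¹) := by
          apply mul_le_mul_of_nonneg_left _ hdmaxpos.le
          exact mul_le_mul_of_nonneg_right hexp (inv_pos.mpr (mul_pos hdminSpos hcardpos)).le
      _ = (Real.sqrt (dmax / (dminS * (S.card:ℝ))) * Real.exp (-(K:ℝ)*μ')) ^ 2 := by
          rw [mul_pow, hs2]
          ring
  rw [eNorm]
  calc Real.sqrt (∑ j, ((H ^ K).mulVec vS - fun i => d i / vol) j ^ 2)
      ≤ Real.sqrt ((Real.sqrt (dmax / (dminS * (S.card:ℝ))) * Real.exp (-(K:ℝ)*μ')) ^ 2) :=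
        Real.sqrt_le_sqrt hchain
    _ = Real.sqrt (dmax / (dminS * (S.card:ℝ))) * Real.exp (-(K:ℝ)*μ') :=
        Real.sqrt_sq hRHS
end
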